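/- arXiv:1911.03767 — 5 statements merged into one kernel-verified Lean document; each statement's English description precedes it below -/
import Mathlib

section
/- Let X be a 2-dimensional real Banach space whose unit sphere admits a continuously differentiable natural parameterization r : ℝ → S_X, and let [a,b] ⊆ ℝ be a closed interval with r([a,b]) ≠ S_X. Then the restriction of r to [a,b] is an isometry of [a,b] onto the arc r([a,b]) equipped with its intrinsic distance d̆ induced by the norm metric; that is, d̆(r(x), r(y)) = |x − y| for all x, y ∈ [a,b]. -/
noncomputable section
open MeasureTheory Set Filter
open scoped ENNReal Topology

variable {X : Type*} [NormedAddCommGroup X] [NormedSpace ℝ X]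

/-- `e^{it} = cos t • e₁ + sin t • e₂` for the basis `b 0, b 1`. -/
def expV (b : Module.Basis (Fin 2) ℝ X) (t : ℝ) : X :=
  Real.cos t • b 0 + Real.sin t • b 1

/-- The polar parameterization `p(t) = e^{it}/‖e^{it}‖` of the unit sphere. -/
def polarParam (b : Module.Basis (Fin 2) ℝ X) (t : ℝ) : X :=
  ‖expV b t‖⁻¹ • expV b t

/-- The Euclidean norm `|x| = √(e₁*(x)² + e₂*(x)²)` associated to the basis. -/
def euclNorm (b : Module.Basis (Fin 2) ℝ X) (x : X) : ℝ :=
  Real.sqrt ((b.coord 0 x)^2 + (b.coord 1 x)^2)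

/-- `c = min{‖x‖ : |x| = 1}`. -/
def cConst (b : Module.Basis (Fin 2) ℝ X) : ℝ :=
  sInf (norm '' {x : X | euclNorm b x = 1})

/-- `C = max{‖x‖ : |x| = 1}`. -/
def CConst (b : Module.Basis (Fin 2) ℝ X) : ℝ :=
  sSup (norm '' {x : X | euclNorm b x = 1})

/-- The right derivative of a function `f : ℝ → X`. -/
def rightDeriv (f : ℝ → X) (t : ℝ) : X := derivWithin f (Ici t) t

/-- The left derivative of a function `f : ℝ → X`. -/
def leftDeriv (f : ℝ → X) (t : ℝ) : X := derivWithin f (Iic t) t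

/-- The arc-length function `s(t) = ∫₀^t ‖p'₊(u)‖ du`. -/
def arcLen (b : Module.Basis (Fin 2) ℝ X) (t : ℝ) : ℝ :=
  ∫ u in (0:ℝ)..t, ‖rightDeriv (polarParam b) u‖

/-- The half-length `L = s(π)` of the unit sphere. -/
def halfLen (b : Module.Basis (Fin 2) ℝ X) : ℝ := arcLen b Real.pi

/-- The inverse `t = s⁻¹` of the arc-length function. -/
def arcInv (b : Module.Basis (Fin 2) ℝ X) : ℝ → ℝ := Function.invFun (arcLen b)

/-- The natural parameterization `r = p ∘ t` of the unit sphere. -/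
def natParam (b : Module.Basis (Fin 2) ℝ X) : ℝ → X := polarParam b ∘ arcInv b

/-- Local absolute continuity of `f` with a.e. derivative `f'`, in the sense that `f` is
differentiable almost everywhere, `f'` is locally integrable, and `f` is recovered from `f'`
by integration. -/
def LocAC {E : Type*} [NormedAddCommGroup E] [NormedSpace ℝ E] [CompleteSpace E]
    (f f' : ℝ → E) : Prop :=
  (∀ᵐ t : ℝ, HasDerivAt f (f' t) t) ∧ LocallyIntegrable f' volume ∧
    ∀ a b : ℝ, a ≤ b → f b - f a = ∫ t in a..b, f' t

/-- `s` is a Lebesgue point of `g`. -/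
def LebesguePoint {E : Type*} [NormedAddCommGroup E] (g : ℝ → E) (s : ℝ) : Prop :=
  Tendsto (fun ε : ℝ => (1/ε) * ∫ t in (0:ℝ)..ε, ‖g (s + t) - g s‖) (𝓝[≠] (0:ℝ)) (𝓝 0)


/-- `d̆_ε(x,y)`: the infimum of lengths of `ε`-chains in `M` from `x` to `y` (with `inf ∅ = ∞`). -/
def chainDist {E : Type*} [NormedAddCommGroup E] (M : Set E) (ε : ℝ) (x y : E) : ℝ≥0∞ :=
  ⨅ (n : ℕ) (c : Fin (n+1) → E) (_ : ∀ i, c i ∈ M) (_ : c 0 = x)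
    (_ : c (Fin.last n) = y) (_ : ∀ i : Fin n, dist (c i.castSucc) (c i.succ) < ε),
    ∑ i : Fin n, ENNReal.ofReal (dist (c i.castSucc) (c i.succ))

/-- The intrinsic distance `d̆(x,y) = sup_{ε>0} d̆_ε(x,y)` of the set `M`. -/
def intrinsicDist {E : Type*} [NormedAddCommGroup E] (M : Set E) (x y : E) : ℝ≥0∞ :=
  ⨆ (ε : ℝ) (_ : 0 < ε), chainDist M ε x y

/-- On a unit-speed curve on the sphere, the velocity is never parallel to the position. -/
lemma deriv_not_parallel {r : ℝ → X} {s : ℝ} {v : X}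
    (hd : HasDerivAt r v s) (hn : ∀ u, ‖r u‖ = 1) (hv : ‖v‖ = 1) (lam : ℝ) :
    v ≠ lam • r s := by
  intro h
  have hlam : |lam| = 1 := by
    have := hn s
    have : ‖v‖ = |lam| * ‖r s‖ := by rw [h, norm_smul, Real.norm_eq_abs]
    rw [hv, hn s, mul_one] at this
    exact this.symm
  have hlam2 : lam * lam = 1 := by
    have := sq_abs lam
    nlinarith [sq_abs lam, hlam]
  have hlo := (hasDerivAt_iff_isLittleO.mp hd).bound (by norm_num : (0:ℝ) < 1/2)
  rw [Metric.eventually_nhds_iff] at hlo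
  obtain ⟨δ, hδ, hb⟩ := hlo
  set x' : ℝ := s + (δ/2) * lam with hx'
  have habs2 : |δ/2 * lam| = δ/2 := by
    rw [abs_mul, hlam, mul_one, abs_of_pos (by linarith : (0:ℝ) < δ/2)]
  have hd1 : dist x' s < δ := by
    rw [Real.dist_eq, hx', add_sub_cancel_left, habs2]
    linarith
  have hb' := hb hd1
  have he : (x' - s) • v = (δ/2) • r s := by
    rw [h, hx']
    rw [add_sub_cancel_left, smul_smul]
    rw [mul_assoc, hlam2, mul_one]
  rw [he] at hb'
  have h1 : r x' - r s - (δ/2) • r s = r x' - (1 + δ/2) • r s := by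
    rw [add_smul, one_smul]; abel
  rw [h1] at hb'
  have h2 : ‖(1 + δ/2) • r s‖ - ‖r x'‖ ≤ ‖r x' - (1 + δ/2) • r s‖ := by
    have := norm_sub_norm_le ((1 + δ/2) • r s) (r x')
    rw [← norm_neg ((1 + δ/2) • r s - r x')] at this
    simpa [neg_sub] using this
  rw [norm_smul, Real.norm_eq_abs, hn s, hn x', mul_one,
    abs_of_pos (by linarith : (0:ℝ) < 1 + δ/2)] at h2
  have h3 : ‖x' - s‖ = δ/2 := by
    simp only [hx', add_sub_cancel_left, Real.norm_eq_abs, abs_mul, hlam]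
    rw [mul_one, abs_of_pos (by linarith : (0:ℝ) < δ/2)]
  rw [h3] at hb'
  linarith

/-- Injectivity of the natural parameterization on an interval missing a point of the sphere. -/
lemma injOn_param {X : Type*} [NormedAddCommGroup X] [NormedSpace ℝ X]
    (hX2 : Module.finrank ℝ X = 2)
    (r : ℝ → X) (hC1 : ContDiff ℝ 1 r)
    (hrange : Set.range r = {x : X | ‖x‖ = 1})
    (hunit : ∀ s : ℝ, ‖deriv r s‖ = 1)
    (a b : ℝ) (p : X) (hp1 : ‖p‖ = 1) (hpn : p ∉ r '' Set.Icc a b) :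
    Set.InjOn r (Set.Icc a b) := by
  have hn : ∀ u, ‖r u‖ = 1 := by
    intro u
    have : r u ∈ Set.range r := ⟨u, rfl⟩
    rw [hrange] at this
    exact this
  have : FiniteDimensional ℝ X := FiniteDimensional.of_finrank_eq_succ hX2
  set φ : X ≃L[ℝ] ℂ :=
    (LinearEquiv.ofFinrankEq X ℂ (hX2.trans Complex.finrank_real_complex.symm)).toContinuousLinearEquiv
  have hdr : ∀ s, HasDerivAt r (deriv r s) s := fun s =>
    ((hC1.differentiable one_ne_zero) s).hasDerivAt
  set f : ℝ → ℂ := fun s => φ (r s) with hf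
  have hfne : ∀ s, f s ≠ 0 := by
    intro s h
    have h0 : r s = 0 := by
      apply φ.injective
      rw [map_zero]
      exact h
    have h1 := hn s
    rw [h0, norm_zero] at h1
    norm_num at h1
  have hφp : (φ p : ℂ) ≠ 0 := by
    intro h
    have h0 : p = 0 := by
      apply φ.injective
      rw [map_zero]
      exact h
    rw [h0, norm_zero] at hp1
    norm_num at hp1
  set w : ℂ := -(φ p)⁻¹ with hw
  have hwne : w ≠ 0 := by simp [hw, hφp]
  set g : ℝ → ℂ := fun s => w * f s with hg
  have hgne : ∀ s, g s ≠ 0 := fun s => mul_ne_zero hwne (hfne s)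
  -- g maps [a,b] into the slit plane
  have hslit : ∀ s ∈ Set.Icc a b, g s ∈ Complex.slitPlane := by
    intro s hs
    by_contra hcon
    rw [Complex.mem_slitPlane_iff] at hcon
    push_neg at hcon
    obtain ⟨hre, him⟩ := hcon
    -- g s is a nonpositive real, nonzero
    have ht : f s = (-(g s).re : ℝ) * φ p := by
      have h1 : g s = ((g s).re : ℂ) := by
        rw [Complex.ext_iff]
        exact ⟨rfl, by simp [him]⟩
      have h2 : f s = w⁻¹ * g s := by
        rw [hg]
        field_simp
      rw [h2, h1, hw]
      push_cast
      field_simp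
      ring_nf
      simp
    have hts : r s = (-(g s).re) • p := by
      apply φ.injective
      rw [φ.map_smul]
      simpa [Complex.real_smul] using ht
    have habs : -(g s).re = 1 := by
      have := hn s
      rw [hts, norm_smul, Real.norm_eq_abs, hp1, mul_one] at this
      rw [abs_of_nonneg (by linarith)] at this
      exact this
    apply hpn
    exact ⟨s, hs, by rw [hts, habs, one_smul]⟩
  set q : ℝ → ℝ := fun s => ((f s)⁻¹ * φ (deriv r s)).im with hq
  have hdf : ∀ s, HasDerivAt f (φ (deriv r s)) s := by
    intro s
    exact (φ.toContinuousLinearMap.hasFDerivAt.comp_hasDerivAt s (hdr s))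
  have hdg : ∀ s, HasDerivAt g (w * φ (deriv r s)) s := fun s => (hdf s).const_mul w
  set α : ℝ → ℝ := fun s => (Complex.log (g s)).im with hα
  have hdα : ∀ s ∈ Set.Icc a b, HasDerivAt α (q s) s := by
    intro s hs
    have h1 : HasDerivAt (fun u => Complex.log (g u)) ((g s)⁻¹ * (w * φ (deriv r s))) s := by
      have := (Complex.hasDerivAt_log (hslit s hs)).comp s (hdg s)
      simpa [mul_comm, Function.comp_def] using this
    have h2 : HasDerivAt α (((g s)⁻¹ * (w * φ (deriv r s))).im) s :=
      (Complex.imCLM.hasFDerivAt.comp_hasDerivAt s h1)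
    have h3 : ((g s)⁻¹ * (w * φ (deriv r s))) = (f s)⁻¹ * φ (deriv r s) := by
      show (w * f s)⁻¹ * (w * φ (deriv r s)) = _
      rw [mul_inv, mul_mul_mul_comm, inv_mul_cancel₀ hwne, one_mul]
    rwa [h3] at h2
  have hq0 : ∀ s, q s ≠ 0 := by
    intro s hq0
    set lam : ℝ := ((f s)⁻¹ * φ (deriv r s)).re with hlam
    have hz : (f s)⁻¹ * φ (deriv r s) = (lam : ℂ) := by
      rw [Complex.ext_iff]
      refine ⟨by simp [hlam], ?_⟩
      rw [Complex.ofReal_im]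
      exact hq0
    have h4 : φ (deriv r s) = (lam : ℂ) * f s := by
      have h5 := congrArg (HMul.hMul (f s)) hz
      rw [mul_inv_cancel_left₀ (hfne s)] at h5
      rw [h5]; ring
    have hds : deriv r s = lam • r s := by
      apply φ.injective
      rw [φ.map_smul]
      simpa [Complex.real_smul] using h4
    exact deriv_not_parallel (hdr s) hn (hunit s) lam hds
  -- q is continuous
  have hqc : Continuous q := by
    have hfc : Continuous f := φ.continuous.comp (hC1.continuous)
    have hdc : Continuous fun s => (φ (deriv r s) : ℂ) :=
      φ.continuous.comp (hC1.continuous_deriv le_rfl)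
    exact Complex.continuous_im.comp ((hfc.inv₀ hfne).mul hdc)
  -- α is continuous on [a,b]
  have hαc : ContinuousOn α (Set.Icc a b) := by
    intro s hs
    have : ContinuousAt α s := by
      have hgc : Continuous g := continuous_const.mul (φ.continuous.comp hC1.continuous)
      exact Complex.continuous_im.continuousAt.comp
        ((continuousAt_clog (hslit s hs)).comp hgc.continuousAt)
    exact this.continuousWithinAt
  -- α is injective on [a,b] by constant sign of q
  have hinjα : Set.InjOn α (Set.Icc a b) := by
    rcases lt_or_gt_of_ne (hq0 a) with hneg | hpos
    · -- q < 0 everywhere on ℝ (by IVT from a)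
      have hqneg : ∀ s, q s < 0 := by
        intro s
        by_contra hc
        push_neg at hc
        have h0 : (0:ℝ) ∈ Set.uIcc (q a) (q s) := by
          rw [Set.mem_uIcc]
          left; constructor <;> linarith
        obtain ⟨u, _, hu⟩ := intermediate_value_uIcc (hqc.continuousOn) h0
        exact hq0 u hu
      have : StrictAntiOn α (Set.Icc a b) := by
        apply strictAntiOn_of_deriv_neg (convex_Icc a b) hαc
        intro x hx
        rw [interior_Icc] at hx
        rw [(hdα x (Set.mem_Icc_of_Ioo hx)).deriv]
        exact hqneg x
      exact this.injOn
    · have hqpos : ∀ s, 0 < q s := by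
        intro s
        by_contra hc
        push_neg at hc
        have h0 : (0:ℝ) ∈ Set.uIcc (q a) (q s) := by
          rw [Set.mem_uIcc]
          right; constructor <;> linarith
        obtain ⟨u, _, hu⟩ := intermediate_value_uIcc (hqc.continuousOn) h0
        exact hq0 u hu
      have : StrictMonoOn α (Set.Icc a b) := by
        apply strictMonoOn_of_deriv_pos (convex_Icc a b) hαc
        intro x hx
        rw [interior_Icc] at hx
        rw [(hdα x (Set.mem_Icc_of_Ioo hx)).deriv]
        exact hqpos x
      exact this.injOn
  intro s hs t ht hst
  apply hinjα hs ht
  simp only [hα, hg, hf, hst]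

lemma telescope_abs (n : ℕ) (t : Fin (n+1) → ℝ) :
    |t 0 - t (Fin.last n)| ≤ ∑ i : Fin n, |t i.castSucc - t i.succ| := by
  have h := dist_le_range_sum_dist
    (fun k : ℕ => t ⟨min k n, Nat.lt_succ_of_le (Nat.min_le_right k n)⟩) n
  simp only [Real.dist_eq] at h
  have e0 : (⟨min 0 n, Nat.lt_succ_of_le (Nat.min_le_right 0 n)⟩ : Fin (n+1)) = 0 := by
    ext; simp
  have el : (⟨min n n, Nat.lt_succ_of_le (Nat.min_le_right n n)⟩ : Fin (n+1)) = Fin.last n := by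
    ext; simp
  rw [e0, el] at h
  refine h.trans (le_of_eq ?_)
  rw [← Fin.sum_univ_eq_sum_range
    (fun k : ℕ => |t ⟨min k n, Nat.lt_succ_of_le (Nat.min_le_right k n)⟩ -
      t ⟨min (k+1) n, Nat.lt_succ_of_le (Nat.min_le_right (k+1) n)⟩|) n]
  apply Finset.sum_congr rfl
  intro i _
  have h1 : (⟨min (↑i) n, Nat.lt_succ_of_le (Nat.min_le_right _ n)⟩ : Fin (n+1)) = i.castSucc := by
    ext; simp [Nat.min_eq_left i.isLt.le]
  have h2 : (⟨min (↑i+1) n, Nat.lt_succ_of_le (Nat.min_le_right _ n)⟩ : Fin (n+1)) = i.succ := by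
    ext; simp [Nat.min_eq_left i.isLt]
  rw [h1, h2]

/-- Uniform local lower estimate for a `C¹` unit-speed curve. -/
lemma local_lower_est {r : ℝ → X} (hC1 : ContDiff ℝ 1 r) (hunit : ∀ s : ℝ, ‖deriv r s‖ = 1)
    (a b : ℝ) {δ : ℝ} (hδ : 0 < δ) :
    ∃ η > 0, ∀ s ∈ Icc a b, ∀ u ∈ Icc a b, |s - u| ≤ η →
      (1 - δ) * |s - u| ≤ ‖r s - r u‖ := by
  have hud := (isCompact_Icc : IsCompact (Icc a b)).uniformContinuousOn_of_continuous
    ((hC1.continuous_deriv le_rfl).continuousOn)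
  rw [Metric.uniformContinuousOn_iff] at hud
  obtain ⟨η₀, hη₀, hu⟩ := hud δ hδ
  refine ⟨η₀/2, by linarith, ?_⟩
  -- first the one-sided version
  have main : ∀ u ∈ Icc a b, ∀ s ∈ Icc a b, u ≤ s → s - u ≤ η₀/2 →
      (1 - δ) * (s - u) ≤ ‖r s - r u‖ := by
    intro u hu' s hs' hus hsu
    have hIcc : Icc u s ⊆ Icc a b := Icc_subset_Icc hu'.1 hs'.2
    have hdr : ∀ v ∈ Icc u s, HasDerivWithinAt (fun v => r v - (v - u) • deriv r u)
        (deriv r v - deriv r u) (Icc u s) v := by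
      intro v _
      have h1 : HasDerivAt r (deriv r v) v := ((hC1.differentiable one_ne_zero) v).hasDerivAt
      have h2 : HasDerivAt (fun v : ℝ => (v - u) • deriv r u) ((1:ℝ) • deriv r u) v :=
        ((hasDerivAt_id v).sub_const u).smul_const (deriv r u)
      rw [one_smul] at h2
      exact (h1.sub h2).hasDerivWithinAt
    have hbd : ∀ v ∈ Ico u s, ‖deriv r v - deriv r u‖ ≤ δ := by
      intro v hv
      have hvm : v ∈ Icc a b := hIcc ⟨hv.1, hv.2.le⟩
      have : dist v u < η₀ := by
        rw [Real.dist_eq, abs_of_nonneg (by linarith [hv.1])]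
        have := hv.2
        linarith
      have := hu v hvm u hu' this
      rw [dist_eq_norm] at this
      linarith
    have := norm_image_sub_le_of_norm_deriv_le_segment' hdr hbd s (by constructor <;> linarith)
    simp only [sub_self, zero_smul, sub_zero] at this
    -- this : ‖r s - (s - u) • deriv r u - r u‖ ≤ δ * (s - u)
    have hlow : ‖(s - u) • deriv r u‖ - ‖r s - r u‖ ≤ δ * (s - u) := by
      refine le_trans ?_ this
      have h3 := norm_sub_norm_le ((s-u) • deriv r u) (r s - r u)
      have h4 : r s - (s - u) • deriv r u - r u = -((s - u) • deriv r u - (r s - r u)) := by abel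
      rw [h4, norm_neg]
      linarith [norm_sub_norm_le ((s-u) • deriv r u) (r s - r u)]
    rw [norm_smul, Real.norm_eq_abs, hunit u, mul_one, abs_of_nonneg (by linarith)] at hlow
    linarith
  intro s hs u hu' hsu
  rcases le_total u s with h | h
  · have := main u hu' s hs h (by rw [abs_of_nonneg (by linarith)] at hsu; linarith)
    rwa [abs_of_nonneg (by linarith)]
  · have := main s hs u hu' h (by rw [abs_of_nonpos (by linarith)] at hsu; linarith)
    rw [abs_of_nonpos (by linarith)]
    rw [← norm_neg, neg_sub, neg_sub]
    exact this
/-- Modulus of continuity for the inverse of an injective continuous map on a compact interval. -/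
lemma inv_modulus {r : ℝ → X} (hc : Continuous r) {a b : ℝ}
    (hinj : Set.InjOn r (Icc a b)) {η : ℝ} (hη : 0 < η) :
    ∃ ε > 0, ∀ s ∈ Icc a b, ∀ u ∈ Icc a b, ‖r s - r u‖ < ε → |s - u| < η := by
  set K : Set (ℝ × ℝ) := (Icc a b ×ˢ Icc a b) ∩ {p : ℝ × ℝ | η ≤ |p.1 - p.2|} with hK
  have hKc : IsCompact K := (isCompact_Icc.prod isCompact_Icc).inter_right
    (isClosed_le continuous_const (continuous_fst.sub continuous_snd).abs)
  by_cases hKe : K.Nonempty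
  · have hFc : Continuous fun p : ℝ × ℝ => ‖r p.1 - r p.2‖ :=
      ((hc.comp continuous_fst).sub (hc.comp continuous_snd)).norm
    obtain ⟨p₀, hp₀K, hmin⟩ := hKc.exists_isMinOn hKe hFc.continuousOn
    have hεp : 0 < ‖r p₀.1 - r p₀.2‖ := by
      rw [norm_sub_pos_iff]
      intro hcon
      have h12 : p₀.1 = p₀.2 := hinj hp₀K.1.1 hp₀K.1.2 hcon
      have := hp₀K.2
      rw [mem_setOf_eq, h12, sub_self, abs_zero] at this
      linarith
    refine ⟨‖r p₀.1 - r p₀.2‖, hεp, ?_⟩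
    intro s hs u hu hlt
    by_contra hcon
    push_neg at hcon
    have hmem : (s, u) ∈ K := ⟨⟨hs, hu⟩, hcon⟩
    have := hmin hmem
    simp only [mem_setOf_eq] at this
    exact absurd hlt (not_lt.mpr this)
  · refine ⟨1, one_pos, ?_⟩
    intro s hs u hu _
    by_contra hcon
    push_neg at hcon
    exact hKe ⟨(s, u), ⟨hs, hu⟩, hcon⟩

/-- Upper bound: the chain distance along the arc is at most the parameter distance. -/
lemma chain_upper {X : Type*} [NormedAddCommGroup X] [NormedSpace ℝ X]
    {r : ℝ → X} (hlip : LipschitzWith 1 r) {a b : ℝ}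
    {x y : ℝ} (hx : x ∈ Set.Icc a b) (hy : y ∈ Set.Icc a b) {ε : ℝ} (hε : 0 < ε) :
    chainDist (r '' Set.Icc a b) ε (r x) (r y) ≤ ENNReal.ofReal |x - y| := by
  obtain ⟨n, hn'⟩ := exists_nat_gt (|x - y| / ε)
  have hnpos : (0:ℝ) < n := lt_of_le_of_lt (by positivity) hn'
  have hn0 : (n:ℝ) ≠ 0 := ne_of_gt hnpos
  set c : Fin (n+1) → X := fun i => r (x + (i:ℝ)/n * (y - x)) with hc
  have hparam : ∀ i : Fin (n+1), x + (i:ℝ)/n * (y - x) ∈ Set.Icc a b := by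
    intro i
    have hθ0 : (0:ℝ) ≤ (i:ℝ)/n := by positivity
    have hθ1 : (i:ℝ)/n ≤ 1 := by
      rw [div_le_one hnpos]
      exact_mod_cast Nat.lt_succ_iff.mp i.isLt
    constructor
    · nlinarith [mul_nonneg (sub_nonneg.2 hθ1) (sub_nonneg.2 hx.1),
        mul_nonneg hθ0 (sub_nonneg.2 hy.1)]
    · nlinarith [mul_nonneg (sub_nonneg.2 hθ1) (sub_nonneg.2 hx.2),
        mul_nonneg hθ0 (sub_nonneg.2 hy.2)]
  have hcmem : ∀ i, c i ∈ r '' Set.Icc a b := fun i => ⟨_, hparam i, rfl⟩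
  have hc0 : c 0 = r x := by
    show r _ = r x
    congr 1
    simp
  have hclast : c (Fin.last n) = r y := by
    show r _ = r y
    congr 1
    rw [Fin.val_last]
    field_simp
    ring
  have hdiff : ∀ i : Fin n, |(x + ((i.castSucc : Fin (n+1)):ℝ)/n * (y - x)) -
      (x + ((i.succ : Fin (n+1)):ℝ)/n * (y - x))| = |x - y|/n := by
    intro i
    have h1 : ((i.succ : Fin (n+1)):ℝ) = (i:ℝ) + 1 := by
      rw [Fin.val_succ]; push_cast; ring
    have h2 : ((i.castSucc : Fin (n+1)):ℝ) = (i:ℝ) := by rw [Fin.coe_castSucc]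
    rw [h1, h2]
    rw [show (x + (i:ℝ)/n * (y - x)) - (x + ((i:ℝ)+1)/n * (y - x)) = (x - y)/n by
      field_simp; ring]
    rw [abs_div, abs_of_pos hnpos]
  have hdist_le : ∀ i : Fin n, dist (c i.castSucc) (c i.succ) ≤ |x - y|/n := by
    intro i
    have := hlip.dist_le_mul (x + ((i.castSucc : Fin (n+1)):ℝ)/n * (y - x))
      (x + ((i.succ : Fin (n+1)):ℝ)/n * (y - x))
    rw [NNReal.coe_one, one_mul, Real.dist_eq, hdiff i] at this
    exact this
  have hdist_lt : ∀ i : Fin n, dist (c i.castSucc) (c i.succ) < ε := by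
    intro i
    refine lt_of_le_of_lt (hdist_le i) ?_
    rw [div_lt_iff₀ hnpos]
    rw [div_lt_iff₀ hε] at hn'
    linarith
  have hle : chainDist (r '' Set.Icc a b) ε (r x) (r y) ≤
      ∑ i : Fin n, ENNReal.ofReal (dist (c i.castSucc) (c i.succ)) := by
    unfold chainDist
    exact iInf_le_of_le n <| iInf_le_of_le c <| iInf_le_of_le hcmem <| iInf_le_of_le hc0 <|
      iInf_le_of_le hclast <| iInf_le_of_le hdist_lt <| le_refl _
  refine hle.trans ?_
  rw [← ENNReal.ofReal_sum_of_nonneg (fun i _ => dist_nonneg)]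
  apply ENNReal.ofReal_le_ofReal
  calc ∑ i : Fin n, dist (c i.castSucc) (c i.succ) ≤ ∑ _i : Fin n, |x - y|/n :=
        Finset.sum_le_sum (fun i _ => hdist_le i)
    _ = n * (|x - y|/n) := by
        rw [Finset.sum_const, Finset.card_univ, Fintype.card_fin, nsmul_eq_mul]
    _ = |x - y| := by field_simp

/-- The restriction of a `C¹` natural parameterization to a closed interval whose image is not
the whole sphere is an isometry onto the arc endowed with its intrinsic distance. -/
theorem natParam_isometry_intrinsicDist {X : Type*}
    [NormedAddCommGroup X] [NormedSpace ℝ X] [CompleteSpace X]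
    (hX2 : Module.finrank ℝ X = 2)
    (r : ℝ → X) (hC1 : ContDiff ℝ 1 r)
    (hrange : Set.range r = {x : X | ‖x‖ = 1})
    (hunit : ∀ s : ℝ, ‖deriv r s‖ = 1)
    (a b : ℝ) (hab : a ≤ b)
    (hne : r '' Set.Icc a b ≠ {x : X | ‖x‖ = 1}) :
    ∀ x ∈ Set.Icc a b, ∀ y ∈ Set.Icc a b,
      intrinsicDist (r '' Set.Icc a b) (r x) (r y) = ENNReal.ofReal |x - y| := by
  intro x hx y hy
  have hnorm1 : ∀ u, ‖r u‖ = 1 := fun u => by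
    have : r u ∈ Set.range r := ⟨u, rfl⟩
    rwa [hrange] at this
  have hlip : LipschitzWith 1 r := by
    apply lipschitzWith_of_nnnorm_deriv_le (hC1.differentiable one_ne_zero)
    intro u
    have h1 : ‖deriv r u‖₊ = 1 := by
      ext
      simpa using hunit u
    simp [h1]
  obtain ⟨p, hp1, hpn⟩ : ∃ p, ‖p‖ = 1 ∧ p ∉ r '' Set.Icc a b := by
    have hsub : r '' Set.Icc a b ⊆ {x : X | ‖x‖ = 1} := by
      rintro _ ⟨s, _, rfl⟩
      exact hnorm1 s
    obtain ⟨p, hp, hpn⟩ := Set.exists_of_ssubset (hsub.ssubset_of_ne hne)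
    exact ⟨p, hp, hpn⟩
  have hinj := injOn_param hX2 r hC1 hrange hunit a b p hp1 hpn
  have hupper : intrinsicDist (r '' Set.Icc a b) (r x) (r y) ≤ ENNReal.ofReal |x - y| := by
    unfold intrinsicDist
    exact iSup₂_le fun ε hε => chain_upper hlip hx hy hε
  refine le_antisymm hupper ?_
  have hlower : ∀ δ : ℝ, 0 < δ → δ < 1 →
      ENNReal.ofReal ((1 - δ) * |x - y|) ≤ intrinsicDist (r '' Set.Icc a b) (r x) (r y) := by
    intro δ hδ0 hδ1
    obtain ⟨η, hη, hstep⟩ := local_lower_est hC1 hunit a b hδ0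
    obtain ⟨ε, hε, hmod⟩ := inv_modulus hC1.continuous hinj hη
    have hchain : ENNReal.ofReal ((1 - δ) * |x - y|) ≤
        chainDist (r '' Set.Icc a b) ε (r x) (r y) := by
      unfold chainDist
      refine le_iInf fun n => le_iInf fun c => le_iInf fun hcmem => le_iInf fun hc0 =>
        le_iInf fun hclast => le_iInf fun hlinks => ?_
      choose t htI hrt using hcmem
      have ht0 : t 0 = x := hinj (htI 0) hx (by rw [hrt 0, hc0])
      have htl : t (Fin.last n) = y := hinj (htI _) hy (by rw [hrt _, hclast])
      have hterm : ∀ i : Fin n,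
          (1 - δ) * |t i.castSucc - t i.succ| ≤ dist (c i.castSucc) (c i.succ) := by
        intro i
        have hd : dist (c i.castSucc) (c i.succ) = ‖r (t i.castSucc) - r (t i.succ)‖ := by
          rw [← hrt i.castSucc, ← hrt i.succ, dist_eq_norm]
        have hlt := hlinks i
        rw [hd] at hlt
        have hηi : |t i.castSucc - t i.succ| < η := hmod _ (htI _) _ (htI _) hlt
        rw [hd]
        exact hstep _ (htI _) _ (htI _) hηi.le
      have h2 : |x - y| ≤ ∑ i : Fin n, |t i.castSucc - t i.succ| := by
        have := telescope_abs n t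
        rwa [ht0, htl] at this
      rw [← ENNReal.ofReal_sum_of_nonneg (fun i _ => dist_nonneg)]
      apply ENNReal.ofReal_le_ofReal
      calc (1 - δ) * |x - y| ≤ (1 - δ) * ∑ i : Fin n, |t i.castSucc - t i.succ| :=
            mul_le_mul_of_nonneg_left h2 (by linarith)
        _ = ∑ i : Fin n, (1 - δ) * |t i.castSucc - t i.succ| := Finset.mul_sum _ _ _
        _ ≤ ∑ i : Fin n, dist (c i.castSucc) (c i.succ) := Finset.sum_le_sum fun i _ => hterm i
    refine hchain.trans ?_
    unfold intrinsicDist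
    exact le_iSup₂_of_le ε hε (le_refl _)
  set D := intrinsicDist (r '' Set.Icc a b) (r x) (r y) with hD
  have hDtop : D ≠ ⊤ := ne_top_of_le_ne_top ENNReal.ofReal_ne_top hupper
  have hreal : ∀ δ : ℝ, 0 < δ → δ < 1 → (1 - δ) * |x - y| ≤ D.toReal := by
    intro δ h1 h2
    exact (ENNReal.ofReal_le_iff_le_toReal hDtop).mp (hlower δ h1 h2)
  have habs : |x - y| ≤ D.toReal := by
    by_contra hcon
    push_neg at hcon
    have hpos : 0 < |x - y| := lt_of_le_of_lt ENNReal.toReal_nonneg hcon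
    set δ := (|x - y| - D.toReal) / (2 * |x - y|) with hδ
    have hδ0 : 0 < δ := by
      apply div_pos
      · linarith
      · linarith
    have hδ1 : δ < 1 := by
      rw [div_lt_one (by linarith)]
      have := ENNReal.toReal_nonneg (a := D)
      linarith
    have hle := hreal δ hδ0 hδ1
    have hexp : (1 - δ) * |x - y| = (|x - y| + D.toReal) / 2 := by
      rw [hδ]
      field_simp
      ring
    rw [hexp] at hle
    linarith
  calc ENNReal.ofReal |x - y| ≤ ENNReal.ofReal D.toReal := ENNReal.ofReal_le_ofReal habs
    _ = D := ENNReal.ofReal_toReal hDtop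

end
end

section
/- Let X be a 2-dimensional real Banach space whose unit sphere admits a continuously differentiable natural parameterization. Then for any two natural parameterizations r₁, r₂ : ℝ → S_X there exists an isometry Φ : ℝ → ℝ of the real line (i.e. Φ(x) = ax + b for some a ∈ {−1, 1} and b ∈ ℝ) such that r₁ = r₂ ∘ Φ. -/
noncomputable section
open MeasureTheory Set Filter
open scoped ENNReal Topology

variable {X : Type*} [NormedAddCommGroup X] [NormedSpace ℝ X]

open Metric Module

lemma indep_of_unit_speed {r : ℝ → X} {t₀ : ℝ} {v : X}
    (hd : HasDerivAt r v t₀) (hnorm : ∀ t, ‖r t‖ = 1) (hv : ‖v‖ = 1) :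
    ∀ c : ℝ, v ≠ c • r t₀ := by
  intro c hc
  have hc1 : c * c = 1 := by
    have h := hv
    rw [hc, norm_smul, hnorm t₀, mul_one, Real.norm_eq_abs] at h
    nlinarith [sq_abs c, sq_nonneg c]
  have hlo := hasDerivAt_iff_isLittleO.1 hd
  have hev := hlo.def (by norm_num : (0:ℝ) < 1/2)
  rw [Metric.eventually_nhds_iff] at hev
  obtain ⟨ε, hε, H⟩ := hev
  set s := ε / 2 with hs
  have hspos : 0 < s := by positivity
  have hdist : dist (t₀ + c * s) t₀ < ε := by
    have : |c| = 1 := by nlinarith [abs_nonneg c, sq_abs c]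
    simp [Real.dist_eq, abs_mul, this, abs_of_pos hspos]
    linarith
  have := H hdist
  have hxt : t₀ + c * s - t₀ = c * s := by ring
  rw [hxt] at this
  have harg : (c * s) • v = s • r t₀ := by
    rw [hc, smul_smul]
    congr 1
    nlinarith
  rw [harg] at this
  have hnm : ‖r (t₀ + c * s) - r t₀ - s • r t₀‖ = ‖r (t₀ + c*s) - (1 + s) • r t₀‖ := by
    congr 1
    module
  rw [hnm] at this
  have hlow : (1 + s) - 1 ≤ ‖r (t₀ + c*s) - (1+s) • r t₀‖ := by
    have h1 : ‖(1+s) • r t₀‖ - ‖r (t₀ + c*s)‖ ≤ ‖r (t₀ + c*s) - (1+s) • r t₀‖ := by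
      have h2 := norm_sub_norm_le ((1+s) • r t₀) (r (t₀ + c*s))
      calc ‖(1+s) • r t₀‖ - ‖r (t₀ + c*s)‖ ≤ ‖(1+s) • r t₀ - r (t₀ + c*s)‖ := h2
      _ = ‖r (t₀ + c*s) - (1+s) • r t₀‖ := by rw [norm_sub_rev]
    rw [norm_smul, hnorm, hnorm, Real.norm_eq_abs, abs_of_pos (by linarith)] at h1
    linarith
  have hup : ‖c * s‖ = s := by
    have : |c| = 1 := by nlinarith [abs_nonneg c, sq_abs c]
    simp [Real.norm_eq_abs, abs_mul, this, abs_of_pos hspos]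
  rw [hup] at this
  linarith

lemma exists_equiv_deriv [CompleteSpace X] (hX2 : Module.finrank ℝ X = 2)
    {r : ℝ → X} (hr : ContDiff ℝ 1 r) (hnorm : ∀ t, ‖r t‖ = 1)
    (hr' : ∀ t, ‖deriv r t‖ = 1) (t : ℝ) :
    ∃ e : (ℝ × ℝ) ≃L[ℝ] X,
      HasStrictFDerivAt (fun p : ℝ × ℝ => p.2 • r p.1) (e : (ℝ × ℝ) →L[ℝ] X) (t, 1) := by
  haveI : FiniteDimensional ℝ X := FiniteDimensional.of_finrank_pos (by omega)
  set v := deriv r t with hv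
  have hder : HasDerivAt r v t := (hr.differentiable one_ne_zero t).hasDerivAt
  have hvind : ∀ c : ℝ, v ≠ c • r t := indep_of_unit_speed hder hnorm (hr' t)
  set N : (ℝ × ℝ) →L[ℝ] X :=
    (ContinuousLinearMap.fst ℝ ℝ ℝ).smulRight v
      + (ContinuousLinearMap.snd ℝ ℝ ℝ).smulRight (r t) with hN
  have hNapp : ∀ p : ℝ × ℝ, N p = p.1 • v + p.2 • r t := fun p => rfl
  have hrt0 : r t ≠ 0 := by
    intro h
    have h1 := hnorm t
    rw [h] at h1
    simp at h1
  have hinj : Function.Injective N := by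
    rw [injective_iff_map_eq_zero]
    intro p hp
    have hp' : p.1 • v + p.2 • r t = 0 := hp
    have hp1 : p.1 = 0 := by
      by_contra h1
      apply hvind ((-p.2) / p.1)
      have h2 : p.1 • v = (-p.2) • r t := by
        rw [neg_smul]
        exact eq_neg_of_add_eq_zero_left hp'
      have h3 := congrArg (fun x : X => p.1⁻¹ • x) h2
      simp only [smul_smul] at h3
      rw [inv_mul_cancel₀ h1, one_smul] at h3
      rw [h3]
      congr 1
      field_simp
    rw [hp1, zero_smul, zero_add] at hp'
    have hp2 : p.2 = 0 := by
      rcases smul_eq_zero.1 hp' with h | h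
      · exact h
      · exact absurd h hrt0
    exact Prod.ext hp1 hp2
  have hfr : Module.finrank ℝ (ℝ × ℝ) = Module.finrank ℝ X := by
    simp [hX2]
  let e₀ := LinearMap.linearEquivOfInjective (N : (ℝ × ℝ) →ₗ[ℝ] X) hinj hfr
  let e := e₀.toContinuousLinearEquiv
  have hce : (e : (ℝ × ℝ) →L[ℝ] X) = N := by
    refine ContinuousLinearMap.ext fun p => ?_
    show e₀.toContinuousLinearEquiv p = N p
    rw [LinearEquiv.coe_toContinuousLinearEquiv']
    rfl
  refine ⟨e, ?_⟩
  rw [hce]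
  have hrs : HasStrictDerivAt r v t := (hr.contDiffAt).hasStrictDerivAt one_ne_zero
  have h1 : HasStrictFDerivAt (fun p : ℝ × ℝ => r p.1)
      ((ContinuousLinearMap.smulRight (1 : ℝ →L[ℝ] ℝ) v).comp
        (ContinuousLinearMap.fst ℝ ℝ ℝ)) (t, 1) :=
    HasStrictFDerivAt.comp (t, 1) hrs hasStrictFDerivAt_fst
  have h2 : HasStrictFDerivAt (fun p : ℝ × ℝ => p.2)
      (ContinuousLinearMap.snd ℝ ℝ ℝ) ((t, 1) : ℝ × ℝ) := hasStrictFDerivAt_snd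
  have hG := h2.smul h1
  refine hG.congr_fderiv ?_
  refine ContinuousLinearMap.ext fun p => ?_
  simp [hNapp]

lemma local_inj [CompleteSpace X] (hX2 : Module.finrank ℝ X = 2)
    {r : ℝ → X} (hr : ContDiff ℝ 1 r) (hnorm : ∀ t, ‖r t‖ = 1)
    (hr' : ∀ t, ‖deriv r t‖ = 1) (t₀ : ℝ) :
    ∃ δ > 0, ∀ t t', |t - t₀| < δ → |t' - t₀| < δ → r t = r t' → t = t' := by
  obtain ⟨e, hG⟩ := exists_equiv_deriv hX2 hr hnorm hr' t₀
  set G : ℝ × ℝ → X := fun p => p.2 • r p.1 with hGdef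
  set Φ := hG.toOpenPartialHomeomorph G with hΦ
  have hsrc : (t₀, (1:ℝ)) ∈ Φ.source := hG.mem_toOpenPartialHomeomorph_source
  have hopen : IsOpen Φ.source := Φ.open_source
  obtain ⟨δ, hδ, hball⟩ := Metric.isOpen_iff.1 hopen _ hsrc
  refine ⟨δ, hδ, fun t t' ht ht' heq => ?_⟩
  have hmem : ∀ s : ℝ, |s - t₀| < δ → (s, (1:ℝ)) ∈ Φ.source := by
    intro s hs
    apply hball
    rw [mem_ball]
    rw [Prod.dist_eq]
    simp [Real.dist_eq, hs, hδ]
  have hGt : ∀ s : ℝ, G (s, 1) = r s := fun s => one_smul ℝ (r s)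
  have hΦc : (Φ : ℝ × ℝ → X) = G := hG.toOpenPartialHomeomorph_coe
  have h1 : Φ (t, 1) = Φ (t', 1) := by
    rw [hΦc, hGt, hGt, heq]
  have := Φ.injOn (hmem t ht) (hmem t' ht') h1
  exact congrArg Prod.fst this

lemma local_lift [CompleteSpace X] (hX2 : Module.finrank ℝ X = 2)
    {r : ℝ → X} (hr : ContDiff ℝ 1 r) (hnorm : ∀ t, ‖r t‖ = 1)
    (hr' : ∀ t, ‖deriv r t‖ = 1)
    {q q' : ℝ → X} (hq : ∀ s, HasDerivAt q (q' s) s) (hq1 : ∀ s, ‖q' s‖ = 1)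
    (hqS : ∀ s, ‖q s‖ = 1) {s₀ t₀ : ℝ} (h0 : q s₀ = r t₀) :
    ∃ δ > 0, ∃ a : ℝ, (a = 1 ∨ a = -1) ∧
      ∀ s, |s - s₀| < δ → q s = r (a * (s - s₀) + t₀) := by
  obtain ⟨e, hG⟩ := exists_equiv_deriv hX2 hr hnorm hr' t₀
  set G : ℝ × ℝ → X := fun p => p.2 • r p.1 with hGdef
  set Φ := hG.toOpenPartialHomeomorph G with hΦ
  have hΦc : (Φ : ℝ × ℝ → X) = G := hG.toOpenPartialHomeomorph_coe
  have hsrc : (t₀, (1:ℝ)) ∈ Φ.source := hG.mem_toOpenPartialHomeomorph_source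
  have hrt₀ : r t₀ = Φ (t₀, 1) := by rw [hΦc]; exact (one_smul ℝ (r t₀)).symm
  have htgt : q s₀ ∈ Φ.target := by
    rw [h0, hrt₀]; exact Φ.map_source hsrc
  have hflip : Φ.symm (q s₀) = (t₀, 1) := by
    rw [h0, hrt₀, Φ.left_inv hsrc]
  have hqc : Continuous q := by
    rw [continuous_iff_continuousAt]; exact fun s => (hq s).continuousAt
  set ψ : ℝ → ℝ := fun s => (Φ.symm (q s)).1 with hψdef
  set w : ℝ → ℝ := fun s => (Φ.symm (q s)).2 with hwdef
  have hGg : ∀ s, q s ∈ Φ.target → w s • r (ψ s) = q s := by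
    intro s hs
    have h1 := Φ.right_inv hs
    rw [hΦc] at h1
    exact h1
  have habs : ∀ s, q s ∈ Φ.target → w s = 1 ∨ w s = -1 := by
    intro s hs
    have h1 : ‖w s • r (ψ s)‖ = 1 := by rw [hGg s hs]; exact hqS s
    rw [norm_smul, hnorm, mul_one, Real.norm_eq_abs] at h1
    exact (abs_eq zero_le_one).1 h1
  have hwc : ContinuousAt w s₀ := by
    have h2 : ContinuousAt (fun s => Φ.symm (q s)) s₀ :=
      (Φ.continuousAt_symm htgt).comp hqc.continuousAt
    exact continuous_snd.continuousAt.comp h2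
  have hw0 : w s₀ = 1 := by rw [hwdef]; simp only [hflip]
  have hO : IsOpen (q ⁻¹' Φ.target) := Φ.open_target.preimage hqc
  obtain ⟨δa, hδa, hba⟩ := Metric.isOpen_iff.1 hO s₀ htgt
  obtain ⟨δb, hδb, hbb⟩ := Metric.continuousAt_iff.1 hwc 1 one_pos
  set δ₁ := min δa δb with hδ₁def
  have hδ₁ : 0 < δ₁ := lt_min hδa hδb
  have hmem : ∀ s ∈ ball s₀ δ₁, q s ∈ Φ.target := by
    intro s hs
    exact hba (mem_of_mem_of_subset hs (ball_subset_ball (min_le_left _ _)))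
  have hw1 : ∀ s ∈ ball s₀ δ₁, w s = 1 := by
    intro s hs
    rcases habs s (hmem s hs) with h | h
    · exact h
    · exfalso
      have h2 : dist s s₀ < δb := lt_of_lt_of_le (mem_ball.1 hs) (min_le_right _ _)
      have h3 := hbb h2
      rw [hw0, Real.dist_eq, h] at h3
      norm_num at h3
  have hq_r : ∀ s ∈ ball s₀ δ₁, q s = r (ψ s) := by
    intro s hs
    rw [← hGg s (hmem s hs), hw1 s hs, one_smul]
  have hψs₀ : ψ s₀ = t₀ := by rw [hψdef]; simp only [hflip]
  have hder : ∀ s ∈ ball s₀ δ₁, ∃ m : ℝ, (m = 1 ∨ m = -1) ∧ HasDerivAt ψ m s := by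
    intro s hs
    obtain ⟨e₂, hG₂⟩ := exists_equiv_deriv hX2 hr hnorm hr' (ψ s)
    have hgs : Φ.symm (q s) = (ψ s, 1) := Prod.ext rfl (hw1 s hs)
    have hd2 : HasFDerivAt (Φ : ℝ × ℝ → X) (e₂ : ℝ × ℝ →L[ℝ] X) (Φ.symm (q s)) := by
      rw [hΦc, hgs]
      exact hG₂.hasFDerivAt
    have hsymm : HasFDerivAt Φ.symm (e₂.symm : X →L[ℝ] (ℝ × ℝ)) (q s) :=
      Φ.hasFDerivAt_symm (hmem s hs) hd2
    have hcomp : HasDerivAt (fun u => Φ.symm (q u)) (e₂.symm (q' s)) s :=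
      hsymm.comp_hasDerivAt s (hq s)
    have hψd : HasDerivAt ψ ((e₂.symm (q' s)).1) s :=
      (ContinuousLinearMap.fst ℝ ℝ ℝ).hasFDerivAt.comp_hasDerivAt s hcomp
    set m := (e₂.symm (q' s)).1 with hmdef
    have hev : (fun u => r (ψ u)) =ᶠ[𝓝 s] q := by
      filter_upwards [isOpen_ball.mem_nhds hs] with u hu
      exact (hq_r u hu).symm
    have hrψ : HasDerivAt (fun u => r (ψ u)) (m • deriv r (ψ s)) s :=
      HasDerivAt.scomp s ((hr.differentiable one_ne_zero (ψ s)).hasDerivAt) hψd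
    have hqd : HasDerivAt q (m • deriv r (ψ s)) s := hrψ.congr_of_eventuallyEq hev.symm
    have huniq : q' s = m • deriv r (ψ s) := (hq s).unique hqd
    have hm : |m| = 1 := by
      have h5 := hq1 s
      rw [huniq, norm_smul, hr', mul_one, Real.norm_eq_abs] at h5
      exact h5
    exact ⟨m, (abs_eq zero_le_one).1 hm, hψd⟩
  choose! M hM1 hM2 using hder
  have key : ∀ x y : ℝ, x ∈ ball s₀ δ₁ → y ∈ ball s₀ δ₁ → x ≤ y → M x ≠ M y → False := by
    intro x y hx hy hxy hne
    have hsub : Icc x y ⊆ ball s₀ δ₁ := ((convex_ball s₀ δ₁).ordConnected).out hx hy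
    have hf : ∀ z ∈ Icc x y, HasDerivWithinAt ψ (M z) (Icc x y) z :=
      fun z hz => (hM2 z (hsub hz)).hasDerivWithinAt
    have h₁ := hM1 x hx
    have h₂ := hM1 y hy
    have h00 : (0:ℝ) ∈ M '' Ioo x y := by
      rcases h₁ with h₁ | h₁ <;> rcases h₂ with h₂ | h₂
      · exact absurd (h₁.trans h₂.symm) hne
      · exact exists_hasDerivWithinAt_eq_of_lt_of_gt hxy hf
          (by rw [h₁]; norm_num) (by rw [h₂]; norm_num)
      · exact exists_hasDerivWithinAt_eq_of_gt_of_lt hxy hf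
          (by rw [h₁]; norm_num) (by rw [h₂]; norm_num)
      · exact absurd (h₁.trans h₂.symm) hne
    obtain ⟨c, hc, hc0⟩ := h00
    rcases hM1 c (hsub (Ioo_subset_Icc_self hc)) with h | h <;> rw [hc0] at h <;> norm_num at h
  have hs₀b : s₀ ∈ ball s₀ δ₁ := mem_ball_self hδ₁
  set a := M s₀ with hadef
  have hMc : ∀ s ∈ ball s₀ δ₁, M s = a := by
    intro s hs
    by_contra hne
    rcases le_total s s₀ with h | h
    · exact key s s₀ hs hs₀b h hne
    · exact key s₀ s hs₀b hs h (fun hh => hne hh.symm)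
  have hdiff0 : ∀ x ∈ ball s₀ δ₁, HasDerivAt (fun u => ψ u - a * u) 0 x := by
    intro x hx
    have h6 := hM2 x hx
    rw [hMc x hx] at h6
    have h7 := h6.sub ((hasDerivAt_id x).const_mul a)
    simp at h7
    exact h7
  have hconst : ∀ s ∈ ball s₀ δ₁, ψ s - a * s = ψ s₀ - a * s₀ := by
    intro s hs
    have hcv : Convex ℝ (ball s₀ δ₁) := convex_ball s₀ δ₁
    refine hcv.is_const_of_fderivWithin_eq_zero (f := fun u => ψ u - a * u)
      (fun x hx => ((hdiff0 x hx).differentiableAt).differentiableWithinAt) ?_ hs hs₀b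
    intro x hx
    rw [fderivWithin_of_isOpen isOpen_ball hx]
    have h8 := (hdiff0 x hx).hasFDerivAt.fderiv
    rw [h8]
    ext z
    simp
  refine ⟨δ₁, hδ₁, a, hM1 s₀ hs₀b, fun s hs => ?_⟩
  have hsb : s ∈ ball s₀ δ₁ := by rwa [mem_ball, Real.dist_eq]
  have h9 := hconst s hsb
  rw [hψs₀] at h9
  have h10 : ψ s = a * (s - s₀) + t₀ := by linarith [h9]
  rw [hq_r s hsb, h10]

lemma lift_forward [CompleteSpace X] (hX2 : Module.finrank ℝ X = 2)
    {r : ℝ → X} (hr : ContDiff ℝ 1 r) (hnorm : ∀ t, ‖r t‖ = 1)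
    (hr' : ∀ t, ‖deriv r t‖ = 1)
    {q q' : ℝ → X} (hq : ∀ s, HasDerivAt q (q' s) s) (hq1 : ∀ s, ‖q' s‖ = 1)
    (hqS : ∀ s, ‖q s‖ = 1) {t₀ a δ₀ : ℝ}
    (ha : a = 1 ∨ a = -1) (hδ₀ : 0 < δ₀)
    (hinit : ∀ s, |s| < δ₀ → q s = r (a * s + t₀)) :
    ∀ s, 0 ≤ s → q s = r (a * s + t₀) := by
  have hqc : Continuous q := by
    rw [continuous_iff_continuousAt]; exact fun s => (hq s).continuousAt
  have hrc : Continuous r := hr.continuous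
  by_contra hbad
  push_neg at hbad
  obtain ⟨sb, hsb0, hsbne⟩ := hbad
  set B : Set ℝ := {s | 0 ≤ s ∧ ∀ u, 0 ≤ u → u ≤ s → q u = r (a * u + t₀)} with hBdef
  have h0B : δ₀ / 2 ∈ B := by
    constructor
    · linarith
    · intro u hu0 hu1
      apply hinit
      rw [abs_of_nonneg hu0]; linarith
  have hBbdd : BddAbove B := by
    refine ⟨sb, fun x hx => ?_⟩
    by_contra hlt
    push_neg at hlt
    exact hsbne (hx.2 sb hsb0 hlt.le)
  set T := sSup B with hTdef
  have hT0 : δ₀ / 2 ≤ T := le_csSup hBbdd h0B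
  have hTpos : 0 < T := by linarith
  have hTgood : ∀ u, 0 ≤ u → u < T → q u = r (a * u + t₀) := by
    intro u hu0 huT
    obtain ⟨x, hxB, hux⟩ := exists_lt_of_lt_csSup ⟨_, h0B⟩ huT
    exact hxB.2 u hu0 hux.le
  have hqT : q T = r (a * T + t₀) := by
    have hcl : T ∈ closure (Ico 0 T) := by
      rw [closure_Ico (ne_of_lt hTpos)]
      exact ⟨hTpos.le, le_rfl⟩
    haveI hne : (𝓝[Ico 0 T] T).NeBot := mem_closure_iff_nhdsWithin_neBot.1 hcl
    have h1 : Tendsto q (𝓝[Ico 0 T] T) (𝓝 (q T)) :=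
      (hqc.continuousAt).continuousWithinAt.tendsto
    have h2 : Tendsto (fun u => r (a * u + t₀)) (𝓝[Ico 0 T] T) (𝓝 (r (a * T + t₀))) :=
      ((hrc.comp ((continuous_const.mul continuous_id).add continuous_const)).continuousAt).continuousWithinAt.tendsto
    have h3 : Tendsto q (𝓝[Ico 0 T] T) (𝓝 (r (a * T + t₀))) := by
      refine h2.congr' ?_
      filter_upwards [self_mem_nhdsWithin] with u hu
      exact (hTgood u hu.1 hu.2).symm
    exact tendsto_nhds_unique h1 h3
  obtain ⟨δ, hδ, ε, hε, hloc⟩ := local_lift hX2 hr hnorm hr' hq hq1 hqS hqT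
  obtain ⟨η, hη, hinj⟩ := local_inj hX2 hr hnorm hr' (a * T + t₀)
  set s₁ := T - min (min δ η / 2) (T / 2) with hs₁def
  have hmpos : 0 < min (min δ η / 2) (T / 2) := by
    apply lt_min
    · have := lt_min hδ hη; positivity
    · positivity
  have hs₁T : s₁ < T := by
    rw [hs₁def]; linarith
  have hs₁0 : 0 ≤ s₁ := by
    have : min (min δ η / 2) (T / 2) ≤ T / 2 := min_le_right _ _
    rw [hs₁def]; linarith
  have hd1 : |s₁ - T| < δ := by
    rw [hs₁def, abs_of_nonpos (by linarith [hmpos])]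
    have h4 : min (min δ η / 2) (T / 2) ≤ min δ η / 2 := min_le_left _ _
    have h5 : min δ η ≤ δ := min_le_left _ _
    have : T - (T - min (min δ η / 2) (T / 2)) = min (min δ η / 2) (T / 2) := by ring
    rw [neg_sub, this]
    linarith
  have hd2 : |s₁ - T| < η := by
    rw [hs₁def, abs_of_nonpos (by linarith [hmpos])]
    have h4 : min (min δ η / 2) (T / 2) ≤ min δ η / 2 := min_le_left _ _
    have h5 : min δ η ≤ η := min_le_right _ _
    have : T - (T - min (min δ η / 2) (T / 2)) = min (min δ η / 2) (T / 2) := by ring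
    rw [neg_sub, this]
    linarith
  have habs_a : |a| = 1 := by rcases ha with h | h <;> rw [h] <;> norm_num
  have habs_ε : |ε| = 1 := by rcases hε with h | h <;> rw [h] <;> norm_num
  have heq1 : q s₁ = r (a * s₁ + t₀) := hTgood s₁ hs₁0 hs₁T
  have heq2 : q s₁ = r (ε * (s₁ - T) + (a * T + t₀)) := hloc s₁ hd1
  have harg1 : |a * s₁ + t₀ - (a * T + t₀)| < η := by
    have : a * s₁ + t₀ - (a * T + t₀) = a * (s₁ - T) := by ring
    rw [this, abs_mul, habs_a, one_mul]
    exact hd2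
  have harg2 : |ε * (s₁ - T) + (a * T + t₀) - (a * T + t₀)| < η := by
    have : ε * (s₁ - T) + (a * T + t₀) - (a * T + t₀) = ε * (s₁ - T) := by ring
    rw [this, abs_mul, habs_ε, one_mul]
    exact hd2
  have hkey : a * s₁ + t₀ = ε * (s₁ - T) + (a * T + t₀) :=
    hinj _ _ harg1 harg2 (heq1.symm.trans heq2)
  have haε : a = ε := by
    have hne : s₁ - T ≠ 0 := by intro h; rw [sub_eq_zero] at h; exact absurd h (ne_of_lt hs₁T)
    have : a * (s₁ - T) = ε * (s₁ - T) := by linarith [hkey]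
    exact mul_right_cancel₀ hne this
  have hTB : T + δ / 2 ∈ B := by
    constructor
    · linarith
    · intro u hu0 hu1
      rcases lt_trichotomy u T with h | h | h
      · exact hTgood u hu0 h
      · rw [h]; exact hqT
      · have : |u - T| < δ := by
          rw [abs_of_pos (by linarith)]
          linarith
        have h7 := hloc u this
        rw [← haε] at h7
        have : a * (u - T) + (a * T + t₀) = a * u + t₀ := by ring
        rwa [this] at h7
  have := le_csSup hBbdd hTB
  linarith

lemma lift_full [CompleteSpace X] (hX2 : Module.finrank ℝ X = 2)
    {r : ℝ → X} (hr : ContDiff ℝ 1 r) (hnorm : ∀ t, ‖r t‖ = 1)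
    (hr' : ∀ t, ‖deriv r t‖ = 1)
    {q q' : ℝ → X} (hq : ∀ s, HasDerivAt q (q' s) s) (hq1 : ∀ s, ‖q' s‖ = 1)
    (hqS : ∀ s, ‖q s‖ = 1) {t₀ : ℝ} (h0 : q 0 = r t₀) :
    ∃ a : ℝ, (a = 1 ∨ a = -1) ∧ ∀ x, q x = r (a * x + t₀) := by
  obtain ⟨δ₀, hδ₀, a, ha, hinit⟩ := local_lift hX2 hr hnorm hr' hq hq1 hqS h0
  have hinit' : ∀ s, |s| < δ₀ → q s = r (a * s + t₀) := by
    intro s hs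
    have := hinit s (by simpa using hs)
    simpa using this
  have hfwd : ∀ s, 0 ≤ s → q s = r (a * s + t₀) :=
    lift_forward hX2 hr hnorm hr' hq hq1 hqS ha hδ₀ hinit'
  set qt : ℝ → X := fun s => q (-s) with hqtdef
  set qt' : ℝ → X := fun s => -q' (-s) with hqt'def
  have hqt : ∀ s, HasDerivAt qt (qt' s) s := by
    intro s
    have h := HasDerivAt.scomp s (hq (-s)) (hasDerivAt_neg s)
    simp at h
    exact h
  have hqt1 : ∀ s, ‖qt' s‖ = 1 := fun s => by
    rw [hqt'def]; simp only [norm_neg]; exact hq1 (-s)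
  have hqtS : ∀ s, ‖qt s‖ = 1 := fun s => hqS (-s)
  have hinitt : ∀ s, |s| < δ₀ → qt s = r (-a * s + t₀) := by
    intro s hs
    have h := hinit' (-s) (by simpa using hs)
    rw [hqtdef]
    simp only
    rw [h]
    ring_nf
  have hat : -a = 1 ∨ -a = -1 := by rcases ha with h | h <;> [right; left] <;> rw [h] <;> ring
  have hbwd : ∀ s, 0 ≤ s → qt s = r (-a * s + t₀) :=
    lift_forward hX2 hr hnorm hr' hqt hqt1 hqtS hat hδ₀ hinitt
  refine ⟨a, ha, fun x => ?_⟩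
  rcases le_total 0 x with h | h
  · exact hfwd x h
  · have h2 := hbwd (-x) (by linarith)
    rw [hqtdef] at h2
    simp only [neg_neg] at h2
    rw [h2]
    ring_nf

/-- Any two natural parameterizations of the unit sphere of a 2-dimensional Banach space
admitting a `C¹` natural parameterization differ by an isometry `x ↦ a·x + c` of the line. -/
theorem natParam_unique_up_to_isometry {X : Type*}
    [NormedAddCommGroup X] [NormedSpace ℝ X] [CompleteSpace X]
    (hX2 : Module.finrank ℝ X = 2)
    (hsm : ∃ r : ℝ → X, ContDiff ℝ 1 r ∧ Set.range r = {x : X | ‖x‖ = 1} ∧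
      ∀ s : ℝ, ‖deriv r s‖ = 1)
    (r₁ r₂ r₁' r₂' : ℝ → X)
    (h₁ : Set.range r₁ = {x : X | ‖x‖ = 1})
    (h₁' : ∀ s : ℝ, HasDerivAt r₁ (r₁' s) s ∧ ‖r₁' s‖ = 1)
    (h₂ : Set.range r₂ = {x : X | ‖x‖ = 1})
    (h₂' : ∀ s : ℝ, HasDerivAt r₂ (r₂' s) s ∧ ‖r₂' s‖ = 1) :
    ∃ a ∈ ({-1, 1} : Set ℝ), ∃ c : ℝ, ∀ x : ℝ, r₁ x = r₂ (a * x + c) := by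
  obtain ⟨r, hrC, hrS, hr'⟩ := hsm
  have hnorm : ∀ t, ‖r t‖ = 1 := fun t => by
    have h : r t ∈ range r := mem_range_self t
    rw [hrS] at h; exact h
  have h1S : ∀ s, ‖r₁ s‖ = 1 := fun s => by
    have h : r₁ s ∈ range r₁ := mem_range_self s
    rw [h₁] at h; exact h
  have h2S : ∀ s, ‖r₂ s‖ = 1 := fun s => by
    have h : r₂ s ∈ range r₂ := mem_range_self s
    rw [h₂] at h; exact h
  have hm1 : r₁ 0 ∈ range r := by rw [hrS]; exact h1S 0
  obtain ⟨t₁, ht₁⟩ := hm1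
  have hm2 : r₂ 0 ∈ range r := by rw [hrS]; exact h2S 0
  obtain ⟨t₂, ht₂⟩ := hm2
  obtain ⟨a₁, ha₁, hl₁⟩ := lift_full hX2 hrC hnorm hr'
    (fun s => (h₁' s).1) (fun s => (h₁' s).2) h1S ht₁.symm
  obtain ⟨a₂, ha₂, hl₂⟩ := lift_full hX2 hrC hnorm hr'
    (fun s => (h₂' s).1) (fun s => (h₂' s).2) h2S ht₂.symm
  have ha₂₂ : a₂ * a₂ = 1 := by rcases ha₂ with h | h <;> rw [h] <;> norm_num
  have hrinv : ∀ y : ℝ, r y = r₂ (a₂ * (y - t₂)) := by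
    intro y
    rw [hl₂ (a₂ * (y - t₂))]
    congr 1
    have : a₂ * (a₂ * (y - t₂)) = (a₂ * a₂) * (y - t₂) := by ring
    rw [this, ha₂₂]
    ring
  refine ⟨a₂ * a₁, ?_, a₂ * (t₁ - t₂), fun x => ?_⟩
  · rcases ha₁ with h | h <;> rcases ha₂ with h' | h' <;> rw [h, h'] <;> norm_num
  · rw [hl₁ x, hrinv (a₁ * x + t₁)]
    congr 1
    ring

end
end

section
/- Let X be a 2-based Banach space with polar parameterization p and constants c, C. Then for every t, ε ∈ ℝ: (c/C)·|sin ε| ≤ ‖p(t+ε) − p(t)‖ ≤ (4C²/c²)·|sin(ε/2)| ≤ (2C²/c²)·|ε|. -/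
noncomputable section
open MeasureTheory Set Filter
open scoped ENNReal Topology

variable {X : Type*} [NormedAddCommGroup X] [NormedSpace ℝ X]

namespace PolarAux

lemma euclNorm_eq (b : Module.Basis (Fin 2) ℝ X) (x : X) :
    euclNorm b x = Real.sqrt ((b.repr x 0)^2 + (b.repr x 1)^2) := by
  simp [euclNorm, Module.Basis.coord_apply]

lemma repr_expV_zero (b : Module.Basis (Fin 2) ℝ X) (t : ℝ) :
    b.repr (expV b t) 0 = Real.cos t := by simp [expV]

lemma repr_expV_one (b : Module.Basis (Fin 2) ℝ X) (t : ℝ) :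
    b.repr (expV b t) 1 = Real.sin t := by simp [expV]

lemma euclNorm_expV (b : Module.Basis (Fin 2) ℝ X) (t : ℝ) :
    euclNorm b (expV b t) = 1 := by
  rw [euclNorm_eq, repr_expV_zero, repr_expV_one, Real.cos_sq_add_sin_sq, Real.sqrt_one]

lemma euclNorm_nonneg (b : Module.Basis (Fin 2) ℝ X) (x : X) : 0 ≤ euclNorm b x :=
  Real.sqrt_nonneg _

lemma euclNorm_smul (b : Module.Basis (Fin 2) ℝ X) (s : ℝ) (x : X) :
    euclNorm b (s • x) = |s| * euclNorm b x := by
  rw [euclNorm_eq, euclNorm_eq]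
  simp only [_root_.map_smul, Finsupp.smul_apply, smul_eq_mul]
  rw [show (s * b.repr x 0)^2 + (s * b.repr x 1)^2
      = s^2 * ((b.repr x 0)^2 + (b.repr x 1)^2) by ring,
    Real.sqrt_mul (sq_nonneg s), Real.sqrt_sq_eq_abs]

lemma euclNorm_eq_zero (b : Module.Basis (Fin 2) ℝ X) {x : X} (h : euclNorm b x = 0) : x = 0 := by
  rw [euclNorm_eq] at h
  have h2 : (b.repr x 0)^2 + (b.repr x 1)^2 = 0 := by
    have := Real.sqrt_eq_zero (by positivity) |>.mp h
    linarith [sq_nonneg (b.repr x 0), sq_nonneg (b.repr x 1)]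
  have h0 : b.repr x 0 = 0 := by nlinarith [sq_nonneg (b.repr x 0), sq_nonneg (b.repr x 1)]
  have h1 : b.repr x 1 = 0 := by nlinarith [sq_nonneg (b.repr x 0), sq_nonneg (b.repr x 1)]
  have : b.repr x = 0 := by
    ext i; fin_cases i <;> simpa
  simpa using congrArg b.repr.symm this

lemma expV_ne_zero (b : Module.Basis (Fin 2) ℝ X) (t : ℝ) : expV b t ≠ 0 := by
  intro h
  have := euclNorm_expV b t
  rw [h] at this
  have : euclNorm b (0:X) = 0 := by
    rw [euclNorm_eq]; simp
  simp_all

lemma norm_expV_pos (b : Module.Basis (Fin 2) ℝ X) (t : ℝ) : 0 < ‖expV b t‖ :=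
  norm_pos_iff.mpr (expV_ne_zero b t)

lemma sphere_nonempty (b : Module.Basis (Fin 2) ℝ X) :
    (norm '' {x : X | euclNorm b x = 1}).Nonempty :=
  ⟨‖expV b 0‖, ⟨expV b 0, euclNorm_expV b 0, rfl⟩⟩

lemma bddAbove_sphere (b : Module.Basis (Fin 2) ℝ X) :
    ∀ y ∈ norm '' {x : X | euclNorm b x = 1}, y ≤ ‖b 0‖ + ‖b 1‖ := by
  rintro y ⟨x, hx, rfl⟩
  have hsum : b.repr x 0 • b 0 + b.repr x 1 • b 1 = x := by
    have := b.sum_repr x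
    rwa [Fin.sum_univ_two] at this
  have hsq : (b.repr x 0)^2 + (b.repr x 1)^2 = 1 := by
    have hx' : Real.sqrt ((b.repr x 0)^2 + (b.repr x 1)^2) = 1 := by
      rw [← euclNorm_eq]; exact hx
    nlinarith [Real.sq_sqrt (by positivity : (0:ℝ) ≤ (b.repr x 0)^2 + (b.repr x 1)^2)]
  have h0 : |b.repr x 0| ≤ 1 := by nlinarith [sq_nonneg (b.repr x 1), sq_abs (b.repr x 0)]
  have h1 : |b.repr x 1| ≤ 1 := by nlinarith [sq_nonneg (b.repr x 0), sq_abs (b.repr x 1)]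
  calc ‖x‖ = ‖b.repr x 0 • b 0 + b.repr x 1 • b 1‖ := by rw [hsum]
    _ ≤ ‖b.repr x 0 • b 0‖ + ‖b.repr x 1 • b 1‖ := norm_add_le _ _
    _ = |b.repr x 0| * ‖b 0‖ + |b.repr x 1| * ‖b 1‖ := by
        rw [norm_smul, norm_smul, Real.norm_eq_abs, Real.norm_eq_abs]
    _ ≤ 1 * ‖b 0‖ + 1 * ‖b 1‖ := by
        gcongr
        all_goals first | exact h0 | exact h1
    _ = ‖b 0‖ + ‖b 1‖ := by ring

lemma norm_le_CConst (b : Module.Basis (Fin 2) ℝ X) {x : X} (hx : euclNorm b x = 1) :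
    ‖x‖ ≤ CConst b :=
  le_csSup ⟨_, bddAbove_sphere b⟩ ⟨x, hx, rfl⟩

lemma cConst_le_norm (b : Module.Basis (Fin 2) ℝ X) {x : X} (hx : euclNorm b x = 1) :
    cConst b ≤ ‖x‖ := by
  apply csInf_le
  · refine ⟨0, ?_⟩
    rintro y ⟨z, _, rfl⟩
    exact norm_nonneg z
  · exact ⟨x, hx, rfl⟩

def euclNormAbs (a c : ℝ) : Prop := Real.sqrt (a^2 + c^2) ≤ |a| + |c|

lemma sqrt_sq_add_sq_le (a c : ℝ) : euclNormAbs a c := by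
  unfold euclNormAbs
  have h : a^2 + c^2 ≤ (|a| + |c|)^2 := by
    nlinarith [sq_abs a, sq_abs c, abs_nonneg a, abs_nonneg c, mul_nonneg (abs_nonneg a) (abs_nonneg c)]
  calc Real.sqrt (a^2 + c^2) ≤ Real.sqrt ((|a| + |c|)^2) := Real.sqrt_le_sqrt h
    _ = |a| + |c| := Real.sqrt_sq (by positivity)

lemma cConst_pos (b : Module.Basis (Fin 2) ℝ X) : 0 < cConst b := by
  have : FiniteDimensional ℝ X := Module.Finite.of_basis b
  set g0 : X →L[ℝ] ℝ := LinearMap.toContinuousLinearMap (b.coord 0) with hg0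
  set g1 : X →L[ℝ] ℝ := LinearMap.toContinuousLinearMap (b.coord 1) with hg1
  set K : ℝ := ‖g0‖ + ‖g1‖ with hK
  have hKpos : 0 < K := by
    have h1 : (1:ℝ) = |g0 (b 0)| := by
      simp [hg0, Module.Basis.coord_apply]
    have h2 : |g0 (b 0)| ≤ ‖g0‖ * ‖b 0‖ := g0.le_opNorm (b 0)
    nlinarith [norm_nonneg g0, norm_nonneg g1, norm_nonneg (b 0),
      g0.opNorm_nonneg]
  have hbound : ∀ x : X, euclNorm b x ≤ K * ‖x‖ := by
    intro x
    have e0 : |b.repr x 0| ≤ ‖g0‖ * ‖x‖ := by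
      have h := g0.le_opNorm x
      rw [hg0] at h
      simpa [Module.Basis.coord_apply] using h
    have e1 : |b.repr x 1| ≤ ‖g1‖ * ‖x‖ := by
      have h := g1.le_opNorm x
      rw [hg1] at h
      simpa [Module.Basis.coord_apply] using h
    rw [euclNorm_eq]
    have habs : euclNormAbs (b.repr x 0) (b.repr x 1) := sqrt_sq_add_sq_le _ _
    calc Real.sqrt ((b.repr x 0)^2 + (b.repr x 1)^2) ≤ |b.repr x 0| + |b.repr x 1| := habs
      _ ≤ ‖g0‖ * ‖x‖ + ‖g1‖ * ‖x‖ := add_le_add e0 e1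
      _ = K * ‖x‖ := by rw [hK]; ring
  have hge : ∀ y ∈ norm '' {x : X | euclNorm b x = 1}, K⁻¹ ≤ y := by
    rintro y ⟨x, hx, rfl⟩
    have := hbound x
    rw [hx] at this
    rw [inv_le_iff_one_le_mul₀ hKpos]
    linarith
  have := le_csInf (sphere_nonempty b) hge
  calc (0:ℝ) < K⁻¹ := by positivity
    _ ≤ cConst b := this

lemma c_mul_le (b : Module.Basis (Fin 2) ℝ X) (x : X) :
    cConst b * euclNorm b x ≤ ‖x‖ := by
  rcases eq_or_ne x 0 with rfl | hx
  · simp [euclNorm_eq]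
  · have hr : 0 < euclNorm b x := by
      rcases lt_or_eq_of_le (euclNorm_nonneg b x) with h | h
      · exact h
      · exact absurd (euclNorm_eq_zero b h.symm) hx
    set r := euclNorm b x
    have h1 : euclNorm b (r⁻¹ • x) = 1 := by
      rw [euclNorm_smul, abs_of_pos (by positivity)]
      field_simp
      rfl
    have := cConst_le_norm b h1
    rw [norm_smul, Real.norm_eq_abs, abs_of_pos (by positivity)] at this
    calc cConst b * r ≤ (r⁻¹ * ‖x‖) * r := by
          exact mul_le_mul_of_nonneg_right this hr.le
      _ = ‖x‖ := by field_simp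
  
lemma le_C_mul (b : Module.Basis (Fin 2) ℝ X) (x : X) :
    ‖x‖ ≤ CConst b * euclNorm b x := by
  rcases eq_or_ne x 0 with rfl | hx
  · simp [euclNorm_eq]
  · have hr : 0 < euclNorm b x := by
      rcases lt_or_eq_of_le (euclNorm_nonneg b x) with h | h
      · exact h
      · exact absurd (euclNorm_eq_zero b h.symm) hx
    set r := euclNorm b x
    have h1 : euclNorm b (r⁻¹ • x) = 1 := by
      rw [euclNorm_smul, abs_of_pos (by positivity)]
      field_simp
      rfl
    have := norm_le_CConst b h1
    rw [norm_smul, Real.norm_eq_abs, abs_of_pos (by positivity)] at this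
    calc ‖x‖ = (r⁻¹ * ‖x‖) * r := by field_simp
      _ ≤ CConst b * r := mul_le_mul_of_nonneg_right this hr.le

lemma cConst_le_CConst (b : Module.Basis (Fin 2) ℝ X) : cConst b ≤ CConst b := by
  have h : euclNorm b (b 0) = 1 := by
    have : b 0 = expV b 0 := by simp [expV]
    rw [this]; exact euclNorm_expV b 0
  exact le_trans (cConst_le_norm b h) (norm_le_CConst b h)

/-- determinant functional -/
def detF (b : Module.Basis (Fin 2) ℝ X) (x y : X) : ℝ :=
  b.repr x 0 * b.repr y 1 - b.repr x 1 * b.repr y 0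

lemma abs_detF_le (b : Module.Basis (Fin 2) ℝ X) (x y : X) :
    |detF b x y| ≤ euclNorm b x * euclNorm b y := by
  rw [euclNorm_eq, euclNorm_eq, detF]
  set a := b.repr x 0; set a' := b.repr x 1
  set c := b.repr y 0; set c' := b.repr y 1
  rw [← Real.sqrt_mul (by positivity)]
  rw [show |a * c' - a' * c| = Real.sqrt ((a * c' - a' * c)^2) by
    rw [Real.sqrt_sq_eq_abs]]
  apply Real.sqrt_le_sqrt
  nlinarith [sq_nonneg (a * c + a' * c')]

lemma detF_smul (b : Module.Basis (Fin 2) ℝ X) (s r : ℝ) (x y : X) :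
    detF b (s • x) (r • y) = s * r * detF b x y := by
  simp only [detF, _root_.map_smul, Finsupp.smul_apply, smul_eq_mul]
  ring

lemma detF_sub_left (b : Module.Basis (Fin 2) ℝ X) (x y z : X) :
    detF b (x - y) z = detF b x z - detF b y z := by
  simp only [detF, _root_.map_sub, Finsupp.sub_apply]
  ring

lemma detF_self (b : Module.Basis (Fin 2) ℝ X) (x : X) : detF b x x = 0 := by
  simp [detF, mul_comm]

lemma detF_expV (b : Module.Basis (Fin 2) ℝ X) (t ε : ℝ) :
    detF b (expV b (t + ε)) (expV b t) = - Real.sin ε := by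
  rw [detF, repr_expV_zero, repr_expV_one, repr_expV_zero, repr_expV_one,
    Real.cos_add, Real.sin_add]
  linear_combination (-Real.sin ε) * (Real.sin_sq_add_cos_sq t)

lemma euclNorm_expV_sub (b : Module.Basis (Fin 2) ℝ X) (t ε : ℝ) :
    euclNorm b (expV b (t + ε) - expV b t) = 2 * |Real.sin (ε / 2)| := by
  rw [euclNorm_eq]
  simp only [_root_.map_sub, Finsupp.sub_apply, repr_expV_zero, repr_expV_one]
  have key : (Real.cos (t + ε) - Real.cos t)^2 + (Real.sin (t + ε) - Real.sin t)^2
      = 4 * ((1 - Real.cos ε) / 2) := by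
    have h1 := Real.sin_sq_add_cos_sq (t + ε)
    have h2 := Real.sin_sq_add_cos_sq t
    have h3 : Real.cos (t + ε) * Real.cos t + Real.sin (t + ε) * Real.sin t = Real.cos ε := by
      rw [← Real.cos_sub]; ring_nf
    nlinarith
  rw [key, show (4 : ℝ) * ((1 - Real.cos ε) / 2) = 2^2 * ((1 - Real.cos ε) / 2) by ring,
    Real.sqrt_mul (by norm_num), Real.sqrt_sq (by norm_num), ← Real.abs_sin_half]

end PolarAux

open PolarAux

/-- Lipschitz-type lower and upper bounds for the polar parameterization. -/
theorem polarParam_bounds [CompleteSpace X] (b : Module.Basis (Fin 2) ℝ X) (t ε : ℝ) :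
    (cConst b / CConst b) * |Real.sin ε| ≤ ‖polarParam b (t + ε) - polarParam b t‖ ∧
    ‖polarParam b (t + ε) - polarParam b t‖ ≤
      (4 * (CConst b)^2 / (cConst b)^2) * |Real.sin (ε / 2)| ∧
    (4 * (CConst b)^2 / (cConst b)^2) * |Real.sin (ε / 2)| ≤
      (2 * (CConst b)^2 / (cConst b)^2) * |ε| := by
  set c := cConst b with hc
  set C := CConst b with hC
  have hcpos : 0 < c := cConst_pos b
  have hcC : c ≤ C := cConst_le_CConst b
  have hCpos : 0 < C := lt_of_lt_of_le hcpos hcC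
  set a := expV b (t + ε) with ha
  set a' := expV b t with ha'
  have hnapos : 0 < ‖a‖ := norm_expV_pos b (t + ε)
  have hnbpos : 0 < ‖a'‖ := norm_expV_pos b t
  have hea : euclNorm b a = 1 := euclNorm_expV b (t + ε)
  have hea' : euclNorm b a' = 1 := euclNorm_expV b t
  have hna_le : ‖a‖ ≤ C := by
    have := le_C_mul b a; rw [hea, mul_one] at this; exact this
  have hna_ge : c ≤ ‖a‖ := by
    have := c_mul_le b a; rw [hea, mul_one] at this; exact this
  have hnb_le : ‖a'‖ ≤ C := by
    have := le_C_mul b a'; rw [hea', mul_one] at this; exact this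
  have hnb_ge : c ≤ ‖a'‖ := by
    have := c_mul_le b a'; rw [hea', mul_one] at this; exact this
  set u := polarParam b (t + ε) - polarParam b t with hu
  have hu' : u = ‖a‖⁻¹ • a - ‖a'‖⁻¹ • a' := by
    rw [hu, polarParam, polarParam, ← ha, ← ha']
  refine ⟨?_, ?_, ?_⟩
  · -- lower bound
    have hD : detF b u (‖a'‖⁻¹ • a') = (‖a‖⁻¹ * ‖a'‖⁻¹) * (- Real.sin ε) := by
      rw [hu', detF_sub_left, detF_smul, detF_smul, detF_self, detF_expV]
      ring
    have hDabs : |detF b u (‖a'‖⁻¹ • a')| = (‖a‖⁻¹ * ‖a'‖⁻¹) * |Real.sin ε| := by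
      rw [hD, abs_mul, abs_neg,
        abs_of_pos (mul_pos (inv_pos.mpr hnapos) (inv_pos.mpr hnbpos))]
    have hle := abs_detF_le b u (‖a'‖⁻¹ • a')
    rw [hDabs, euclNorm_smul, hea', abs_of_pos (inv_pos.mpr hnbpos), mul_one] at hle
    -- from hle : (‖a‖⁻¹ * ‖a'‖⁻¹) * |sin ε| ≤ euclNorm u * ‖a'‖⁻¹
    have key : |Real.sin ε| ≤ euclNorm b u * ‖a‖ := by
      have h2 := mul_le_mul_of_nonneg_right hle (le_of_lt (mul_pos hnapos hnbpos))
      calc |Real.sin ε| = (‖a‖⁻¹ * ‖a'‖⁻¹) * |Real.sin ε| * (‖a‖ * ‖a'‖) := by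
            field_simp
        _ ≤ euclNorm b u * ‖a'‖⁻¹ * (‖a‖ * ‖a'‖) := h2
        _ = euclNorm b u * ‖a‖ := by field_simp
    rw [div_mul_eq_mul_div, div_le_iff₀ hCpos]
    have h3 : c * euclNorm b u ≤ ‖u‖ := c_mul_le b u
    nlinarith [mul_le_mul_of_nonneg_left key hcpos.le,
      mul_le_mul_of_nonneg_right h3 (norm_nonneg a),
      mul_le_mul_of_nonneg_left hna_le (norm_nonneg u)]
  · -- upper bound
    have hsplit : u = ‖a‖⁻¹ • (a - a') + (‖a‖⁻¹ - ‖a'‖⁻¹) • a' := by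
      rw [hu', smul_sub, sub_smul]
      abel
    have hstep1 : ‖u‖ ≤ ‖a‖⁻¹ * ‖a - a'‖ + |‖a‖⁻¹ - ‖a'‖⁻¹| * ‖a'‖ := by
      calc ‖u‖ = ‖‖a‖⁻¹ • (a - a') + (‖a‖⁻¹ - ‖a'‖⁻¹) • a'‖ := by rw [hsplit]
        _ ≤ ‖‖a‖⁻¹ • (a - a')‖ + ‖(‖a‖⁻¹ - ‖a'‖⁻¹) • a'‖ := norm_add_le _ _
        _ = ‖a‖⁻¹ * ‖a - a'‖ + |‖a‖⁻¹ - ‖a'‖⁻¹| * ‖a'‖ := by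
            rw [norm_smul, norm_smul, Real.norm_eq_abs, Real.norm_eq_abs,
              abs_of_pos (by positivity)]
    have hstep2 : |‖a‖⁻¹ - ‖a'‖⁻¹| * ‖a'‖ = |‖a'‖ - ‖a‖| * ‖a‖⁻¹ := by
      rw [show ‖a‖⁻¹ - ‖a'‖⁻¹ = (‖a'‖ - ‖a‖) * (‖a‖⁻¹ * ‖a'‖⁻¹) by field_simp,
        abs_mul, abs_of_pos (show (0:ℝ) < ‖a‖⁻¹ * ‖a'‖⁻¹ from
          mul_pos (inv_pos.mpr hnapos) (inv_pos.mpr hnbpos))]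
      field_simp <;> ring
    have hstep3 : |‖a'‖ - ‖a‖| ≤ ‖a - a'‖ := by
      rw [norm_sub_rev]
      exact abs_norm_sub_norm_le a' a
    have hdiff : ‖a - a'‖ ≤ C * (2 * |Real.sin (ε / 2)|) := by
      have := le_C_mul b (a - a')
      rwa [euclNorm_expV_sub b t ε] at this
    have hmain : ‖u‖ ≤ 2 * ‖a - a'‖ * ‖a‖⁻¹ := by
      calc ‖u‖ ≤ ‖a‖⁻¹ * ‖a - a'‖ + |‖a‖⁻¹ - ‖a'‖⁻¹| * ‖a'‖ := hstep1
        _ = ‖a - a'‖ * ‖a‖⁻¹ + |‖a'‖ - ‖a‖| * ‖a‖⁻¹ := by rw [hstep2]; ring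
        _ ≤ ‖a - a'‖ * ‖a‖⁻¹ + ‖a - a'‖ * ‖a‖⁻¹ := by
            gcongr
        _ = 2 * ‖a - a'‖ * ‖a‖⁻¹ := by ring
    rw [div_mul_eq_mul_div, le_div_iff₀ (by positivity : (0:ℝ) < c^2)]
    have h4 : ‖u‖ * ‖a‖ ≤ 2 * ‖a - a'‖ := by
      have := mul_le_mul_of_nonneg_right hmain hnapos.le
      calc ‖u‖ * ‖a‖ ≤ 2 * ‖a - a'‖ * ‖a‖⁻¹ * ‖a‖ := this
        _ = 2 * ‖a - a'‖ := by field_simp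
    calc ‖u‖ * c^2 = (‖u‖ * c) * c := by ring
      _ ≤ (‖u‖ * ‖a‖) * c := by gcongr
      _ ≤ (2 * ‖a - a'‖) * c := mul_le_mul_of_nonneg_right h4 hcpos.le
      _ ≤ (2 * (C * (2 * |Real.sin (ε / 2)|))) * c := by gcongr
      _ ≤ 4 * C^2 * |Real.sin (ε / 2)| := by
          nlinarith [mul_nonneg (mul_nonneg hCpos.le (abs_nonneg (Real.sin (ε / 2))))
            (sub_nonneg.mpr hcC)]
  · -- third
    have hs : |Real.sin (ε / 2)| ≤ |ε| / 2 := by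
      have := Real.abs_sin_le_abs (x := ε / 2)
      rwa [abs_div, abs_two] at this
    have hK : (0:ℝ) ≤ C^2 / c^2 := by positivity
    calc (4 * C^2 / c^2) * |Real.sin (ε / 2)| ≤ (4 * C^2 / c^2) * (|ε| / 2) := by
          gcongr
      _ = (2 * C^2 / c^2) * |ε| := by ring

end
end

section
/- Let X be a 2-based Banach space with polar parameterization p. Then p is twice differentiable at almost every point of ℝ, and there exists a locally integrable function g : ℝ → X such that for almost every t ∈ ℝ the second derivative p''(t) exists and equals g(t). -/
noncomputable section
open MeasureTheory Set Filter
open scoped ENNReal Topology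

variable {X : Type*} [NormedAddCommGroup X] [NormedSpace ℝ X]

section PolarAuxProofs
open Real
open scoped NNReal


section ConvexRD
variable {φ : ℝ → ℝ}

lemma convex_hasDerivWithinAt_Ici_sInf (hφ : ConvexOn ℝ univ φ) (x : ℝ) :
    HasDerivWithinAt φ (sInf (slope φ x '' Ioi x)) (Ici x) x := by
  have hm0 : MonotoneOn (slope φ x) (univ \ {x}) := hφ.slope_mono (mem_univ x)
  have hmono : MonotoneOn (slope φ x) (Ioi x) :=
    hm0.mono (fun y hy => ⟨trivial, ne_of_gt hy⟩)
  have hbdd : BddBelow (slope φ x '' Ioi x) := by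
    refine ⟨slope φ x (x - 1), ?_⟩
    rintro _ ⟨y, hy, rfl⟩
    exact hm0 ⟨trivial, by simp⟩ ⟨trivial, ne_of_gt hy⟩ (by linarith [mem_Ioi.mp hy])
  have htend := hmono.tendsto_nhdsGT hbdd
  rw [hasDerivWithinAt_iff_tendsto_slope, Ici_sdiff_left]
  exact htend

lemma convex_derivWithin_Ici_eq (hφ : ConvexOn ℝ univ φ) (x : ℝ) :
    derivWithin φ (Ici x) x = sInf (slope φ x '' Ioi x) :=
  (convex_hasDerivWithinAt_Ici_sInf hφ x).derivWithin ((uniqueDiffOn_Ici x) x self_mem_Ici)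

lemma convex_hasDerivWithinAt_Ici (hφ : ConvexOn ℝ univ φ) (x : ℝ) :
    HasDerivWithinAt φ (derivWithin φ (Ici x) x) (Ici x) x := by
  rw [convex_derivWithin_Ici_eq hφ x]; exact convex_hasDerivWithinAt_Ici_sInf hφ x

lemma convex_bddBelow_slope (hφ : ConvexOn ℝ univ φ) (x : ℝ) :
    BddBelow (slope φ x '' Ioi x) := by
  have hm0 : MonotoneOn (slope φ x) (univ \ {x}) := hφ.slope_mono (mem_univ x)
  refine ⟨slope φ x (x - 1), ?_⟩
  rintro _ ⟨y, hy, rfl⟩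
  exact hm0 ⟨trivial, by simp⟩ ⟨trivial, ne_of_gt hy⟩ (by linarith [mem_Ioi.mp hy])

lemma convex_rightDeriv_mono (hφ : ConvexOn ℝ univ φ) :
    Monotone (fun x => derivWithin φ (Ici x) x) := by
  intro x y hxy
  rcases eq_or_lt_of_le hxy with rfl | hxy
  · exact le_rfl
  simp only [convex_derivWithin_Ici_eq hφ]
  have h1 : sInf (slope φ x '' Ioi x) ≤ slope φ x y :=
    csInf_le (convex_bddBelow_slope hφ x) (mem_image_of_mem _ hxy)
  refine h1.trans (le_csInf (Set.Nonempty.image _ ⟨y + 1, by simp [mem_Ioi]⟩) ?_)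
  rintro _ ⟨z, hz, rfl⟩
  rw [slope_comm]
  exact hφ.slope_mono (mem_univ y) ⟨trivial, ne_of_lt hxy⟩ ⟨trivial, ne_of_gt hz⟩
    (by linarith [mem_Ioi.mp hz])

/-- bound on one-sided derivative of a Lipschitz function -/
lemma abs_rightDeriv_le_of_lipschitz {K : ℝ≥0} (hL : LipschitzWith K φ) {d x : ℝ}
    (hd : HasDerivWithinAt φ d (Ici x) x) : |d| ≤ K := by
  rw [hasDerivWithinAt_iff_tendsto_slope, Ici_sdiff_left] at hd
  have habs : Tendsto (fun y => |slope φ x y|) (𝓝[>] x) (𝓝 |d|) := hd.abs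
  refine le_of_tendsto habs ?_
  filter_upwards [self_mem_nhdsWithin] with y hy
  have hyx : y ≠ x := ne_of_gt hy
  rw [slope_def_field, abs_div]
  rw [div_le_iff₀ (by simp [abs_pos, sub_ne_zero.mpr hyx] : (0:ℝ) < |y - x|)]
  have := hL.dist_le_mul y x
  simpa [Real.dist_eq, mul_comm] using this

end ConvexRD


variable (b : Module.Basis (Fin 2) ℝ X)

lemma expV_pi_div_two_add (t : ℝ) :
    expV b (t + π/2) = (-Real.sin t) • b 0 + Real.cos t • b 1 := by
  simp [expV, Real.cos_add_pi_div_two, Real.sin_add_pi_div_two]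

lemma hasDerivAt_expV (t : ℝ) : HasDerivAt (expV b) (expV b (t + π/2)) t := by
  rw [expV_pi_div_two_add]
  exact ((Real.hasDerivAt_cos t).smul_const (b 0)).add
    ((Real.hasDerivAt_sin t).smul_const (b 1))

lemma expV_add (t s : ℝ) :
    expV b (t + s) = Real.cos s • expV b t + Real.sin s • expV b (t + π/2) := by
  rw [expV_pi_div_two_add]
  simp only [expV, Real.cos_add, Real.sin_add, smul_add, smul_smul]
  module

lemma expV_ne_zero (t : ℝ) : expV b t ≠ 0 := by
  intro h
  have h0 := congrArg (b.coord 0) h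
  have h1 := congrArg (b.coord 1) h
  simp [expV, map_add, _root_.map_smul, Module.Basis.coord_apply, Module.Basis.repr_self] at h0 h1
  nlinarith [Real.sin_sq_add_cos_sq t]

lemma norm_expV_pos (t : ℝ) : 0 < ‖expV b t‖ := norm_pos_iff.mpr (expV_ne_zero b t)

lemma norm_expV_le (t : ℝ) : ‖expV b t‖ ≤ ‖b 0‖ + ‖b 1‖ := by
  refine (norm_add_le _ _).trans ?_
  rw [norm_smul, norm_smul]
  have h1 : |Real.cos t| ≤ 1 := abs_cos_le_one t
  have h2 : |Real.sin t| ≤ 1 := abs_sin_le_one t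
  simp only [Real.norm_eq_abs]
  nlinarith [norm_nonneg (b 0), norm_nonneg (b 1)]

lemma continuous_expV : Continuous (expV b) := by
  unfold expV; fun_prop

lemma lipschitz_norm_expV :
    LipschitzWith (‖b 0‖₊ + ‖b 1‖₊) (fun t => ‖expV b t‖) := by
  have h1 : LipschitzWith (‖b 0‖₊ + ‖b 1‖₊) (expV b) := by
    refine lipschitzWith_of_nnnorm_deriv_le (fun t => (hasDerivAt_expV b t).differentiableAt) ?_
    intro x
    rw [(hasDerivAt_expV b x).deriv]
    have := norm_expV_le b (x + π/2)
    rw [← NNReal.coe_le_coe, coe_nnnorm]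
    
    exact this
  simpa [Function.comp_def] using (lipschitzWith_one_norm (E := X)).comp h1



def hfun (b : Module.Basis (Fin 2) ℝ X) (t0 : ℝ) : ℝ → ℝ :=
  fun u => ‖expV b t0 + u • expV b (t0 + π/2)‖
def mfun (b : Module.Basis (Fin 2) ℝ X) (t0 : ℝ) : ℝ → ℝ :=
  fun u => derivWithin (hfun b t0) (Ici u) u
def nE (b : Module.Basis (Fin 2) ℝ X) : ℝ → ℝ := fun t => ‖expV b t‖
def qf (b : Module.Basis (Fin 2) ℝ X) : ℝ → ℝ := fun t => derivWithin (nE b) (Ici t) t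

variable (b : Module.Basis (Fin 2) ℝ X) (t0 : ℝ)

lemma hfun_convex : ConvexOn ℝ univ (hfun b t0) := by
  have : hfun b t0 = (fun x : X => ‖x‖) ∘
      (AffineMap.lineMap (expV b t0) (expV b t0 + expV b (t0 + π/2)) : ℝ →ᵃ[ℝ] X) := by
    funext u
    simp [hfun, AffineMap.lineMap_apply]
    ring_nf
    congr 1
    module
  rw [this]
  have h := (convexOn_univ_norm (E := X)).comp_affineMap
      (AffineMap.lineMap (expV b t0) (expV b t0 + expV b (t0 + π/2)))
  simpa using h

lemma hfun_lip : LipschitzWith ‖expV b (t0 + π/2)‖₊ (hfun b t0) := by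
  refine LipschitzWith.of_dist_le_mul fun u u' => ?_
  simp only [hfun, Real.dist_eq]
  have h1 : |‖expV b t0 + u • expV b (t0 + π/2)‖ - ‖expV b t0 + u' • expV b (t0 + π/2)‖|
      ≤ ‖(u - u') • expV b (t0 + π/2)‖ := by
    refine (abs_norm_sub_norm_le _ _).trans_eq ?_
    congr 1
    module
  rw [norm_smul] at h1
  simpa [Real.dist_eq, coe_nnnorm, mul_comm] using h1

lemma nE_model {t : ℝ} (ht : t ∈ Ioo (t0 - π/2) (t0 + π/2)) :
    nE b t = Real.cos (t - t0) * hfun b t0 (Real.tan (t - t0)) := by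
  have hs : t - t0 ∈ Ioo (-(π/2)) (π/2) := ⟨by linarith [ht.1], by linarith [ht.2]⟩
  have hcos : 0 < Real.cos (t - t0) := Real.cos_pos_of_mem_Ioo hs
  have hE : expV b t = Real.cos (t - t0) •
      (expV b t0 + Real.tan (t - t0) • expV b (t0 + π/2)) := by
    have := expV_add b t0 (t - t0)
    rw [show t0 + (t - t0) = t by ring] at this
    rw [this, smul_add, smul_smul, Real.tan_eq_sin_div_cos,
      mul_div_cancel₀ _ (ne_of_gt hcos)]
  rw [nE, hE, norm_smul, Real.norm_eq_abs, abs_of_pos hcos, hfun]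

lemma nE_hasDerivWithinAt {t : ℝ} (ht : t ∈ Ioo (t0 - π/2) (t0 + π/2)) :
    HasDerivWithinAt (nE b) (-Real.sin (t - t0) * hfun b t0 (Real.tan (t - t0))
      + mfun b t0 (Real.tan (t - t0)) / Real.cos (t - t0)) (Ici t) t := by
  have hs : t - t0 ∈ Ioo (-(π/2)) (π/2) := ⟨by linarith [ht.1], by linarith [ht.2]⟩
  have hcos : 0 < Real.cos (t - t0) := Real.cos_pos_of_mem_Ioo hs
  have hτ : HasDerivAt (fun t' => Real.tan (t' - t0)) (1 / Real.cos (t - t0) ^ 2) t := by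
    have := (Real.hasDerivAt_tan (ne_of_gt hcos)).comp t ((hasDerivAt_id t).sub_const t0)
    simpa [Function.comp_def] using this
  have hmdl := convex_hasDerivWithinAt_Ici (hfun_convex b t0) (Real.tan (t - t0))
  have hmaps : MapsTo (fun t' => Real.tan (t' - t0)) (Ici t ∩ Ioo (t0 - π/2) (t0 + π/2))
      (Ici (Real.tan (t - t0))) := by
    rintro t' ⟨h1, h2⟩
    have hs' : t' - t0 ∈ Ioo (-(π/2)) (π/2) := ⟨by linarith [h2.1], by linarith [h2.2]⟩
    exact mem_Ici.mpr (Real.strictMonoOn_tan.monotoneOn hs hs'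
      (by simp only [mem_Ici] at h1; linarith))
  have step1 : HasDerivWithinAt (fun t' => hfun b t0 (Real.tan (t' - t0)))
      (mfun b t0 (Real.tan (t - t0)) * (1 / Real.cos (t - t0) ^ 2))
      (Ici t ∩ Ioo (t0 - π/2) (t0 + π/2)) t :=
    by have := hmdl.comp t (hτ.hasDerivWithinAt) hmaps; exact this
  have hcosd : HasDerivWithinAt (fun t' => Real.cos (t' - t0)) (-Real.sin (t - t0))
      (Ici t ∩ Ioo (t0 - π/2) (t0 + π/2)) t := by
    have := (Real.hasDerivAt_cos (t - t0)).comp t ((hasDerivAt_id t).sub_const t0)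
    simpa [Function.comp_def] using this.hasDerivWithinAt
  have step2 := hcosd.mul step1
  have step3 : HasDerivWithinAt (nE b)
      (-Real.sin (t - t0) * hfun b t0 (Real.tan (t - t0)) +
        Real.cos (t - t0) * (mfun b t0 (Real.tan (t - t0)) * (1 / Real.cos (t - t0) ^ 2)))
      (Ici t ∩ Ioo (t0 - π/2) (t0 + π/2)) t := by
    refine step2.congr (fun y hy => nE_model b t0 hy.2) (nE_model b t0 ht)
  have step4 := (hasDerivWithinAt_inter (Ioo_mem_nhds ht.1 ht.2)).mp step3
  refine step4.congr_deriv ?_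
  field_simp

lemma qf_eq {t : ℝ} (ht : t ∈ Ioo (t0 - π/2) (t0 + π/2)) :
    qf b t = -Real.sin (t - t0) * hfun b t0 (Real.tan (t - t0))
      + mfun b t0 (Real.tan (t - t0)) / Real.cos (t - t0) :=
  (nE_hasDerivWithinAt b t0 ht).derivWithin ((uniqueDiffOn_Ici t) t self_mem_Ici)

lemma qf_hasDerivWithinAt (t : ℝ) : HasDerivWithinAt (nE b) (qf b t) (Ici t) t := by
  have ht : t ∈ Ioo (t - π/2) (t + π/2) := by
    constructor <;> simp <;> positivity
  have := nE_hasDerivWithinAt b t ht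
  rwa [← qf_eq b t ht] at this

/-- the golden identity -/
lemma key_identity {t : ℝ} (ht : t ∈ Ioo (t0 - π/2) (t0 + π/2)) :
    Real.cos (t - t0) * qf b t + Real.sin (t - t0) * nE b t
      = mfun b t0 (Real.tan (t - t0)) := by
  have hs : t - t0 ∈ Ioo (-(π/2)) (π/2) := ⟨by linarith [ht.1], by linarith [ht.2]⟩
  have hcos : 0 < Real.cos (t - t0) := Real.cos_pos_of_mem_Ioo hs
  rw [qf_eq b t0 ht, nE_model b t0 ht]
  field_simp
  ring



def Mb (b : Module.Basis (Fin 2) ℝ X) : ℝ := ‖b 0‖ + ‖b 1‖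

variable (b : Module.Basis (Fin 2) ℝ X)

lemma Mb_nonneg : 0 ≤ Mb b := add_nonneg (norm_nonneg _) (norm_nonneg _)

lemma abs_qf_le (t : ℝ) : |qf b t| ≤ Mb b := by
  have := abs_rightDeriv_le_of_lipschitz (lipschitz_norm_expV b) (qf_hasDerivWithinAt b t)
  simpa [Mb] using this

lemma abs_mfun_le (t0 u : ℝ) : |mfun b t0 u| ≤ Mb b := by
  have h := abs_rightDeriv_le_of_lipschitz (hfun_lip b t0)
    (convex_hasDerivWithinAt_Ici (hfun_convex b t0) u)
  refine h.trans ?_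
  simpa [Mb] using norm_expV_le b (t0 + π/2)

lemma abs_nE_le (t : ℝ) : |nE b t| ≤ Mb b := by
  have h := norm_expV_le b t
  have : |nE b t| = ‖expV b t‖ := abs_of_pos (norm_expV_pos b t)
  rw [this]; simpa [Mb] using h

lemma nE_ae_hasDerivAt : ∀ᵐ t, HasDerivAt (nE b) (qf b t) t := by
  have h := (lipschitz_norm_expV b).ae_differentiableAt (μ := volume)
  filter_upwards [h] with t ht
  have h1 : HasDerivAt (nE b) (deriv (nE b) t) t := ht.hasDerivAt
  have h2 : qf b t = deriv (nE b) t :=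
    h1.hasDerivWithinAt.derivWithin ((uniqueDiffOn_Ici t) t self_mem_Ici)
  rwa [h2]

lemma qf_good (t0 : ℝ) :
    (∀ᵐ t, t ∈ Ioo (t0 - 1/2) (t0 + 1/2) → DifferentiableAt ℝ (qf b) t) ∧
      IntegrableOn (deriv (qf b)) (Ioo (t0 - 1/2) (t0 + 1/2)) := by
  have pi3 := Real.pi_gt_three
  set J := Ioo (t0 - 1/2) (t0 + 1/2) with hJ
  set clamp : ℝ → ℝ := fun s => max (-(1/2)) (min (1/2) s) with hclamp
  have hclampmem : ∀ s, clamp s ∈ Icc (-(1/2 : ℝ)) (1/2) := fun s =>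
    ⟨le_max_left _ _, max_le (by norm_num) (min_le_left _ _)⟩
  have hclampmono : Monotone clamp := fun s s' h =>
    max_le_max le_rfl (min_le_min le_rfl h)
  have memIoo : ∀ s : ℝ, s ∈ Icc (-(1/2 : ℝ)) (1/2) → s ∈ Ioo (-(π/2)) (π/2) :=
    fun s hs => ⟨by linarith [hs.1], by linarith [hs.2]⟩
  set Φ : ℝ → ℝ := fun t => mfun b t0 (Real.tan (clamp (t - t0))) with hΦdef
  have hΦmono : Monotone Φ := by
    intro t t' h
    refine convex_rightDeriv_mono (hfun_convex b t0) ?_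
    exact Real.strictMonoOn_tan.monotoneOn (memIoo _ (hclampmem _)) (memIoo _ (hclampmem _))
      (hclampmono (by linarith))
  have hΦeq : ∀ t ∈ J, Φ t = Real.cos (t - t0) * qf b t + Real.sin (t - t0) * nE b t := by
    intro t ht
    have h1 : clamp (t - t0) = t - t0 := by
      rw [hclamp]
      simp only
      rw [min_eq_right (by linarith [ht.2] : t - t0 ≤ 1/2),
        max_eq_right (by linarith [ht.1] : -(1/2 : ℝ) ≤ t - t0)]
    have ht' : t ∈ Ioo (t0 - π/2) (t0 + π/2) := ⟨by linarith [ht.1], by linarith [ht.2]⟩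
    rw [hΦdef]
    simp only
    rw [h1, ← key_identity b t0 ht']
  have hc0pos : 0 < Real.cos (1/2) :=
    Real.cos_pos_of_mem_Ioo ⟨by linarith, by linarith⟩
  have hc0 : ∀ t ∈ J, Real.cos (1/2) ≤ Real.cos (t - t0) := by
    intro t ht
    rw [← Real.cos_abs (t - t0)]
    refine Real.cos_le_cos_of_nonneg_of_le_pi (abs_nonneg _) (by linarith) ?_
    rw [abs_le]; exact ⟨by linarith [ht.1], by linarith [ht.2]⟩
  have hcpos : ∀ t ∈ J, 0 < Real.cos (t - t0) := fun t ht => lt_of_lt_of_le hc0pos (hc0 t ht)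
  have hqrep : ∀ t ∈ J, qf b t
      = (Φ t - Real.sin (t - t0) * nE b t) * (Real.cos (t - t0))⁻¹ := by
    intro t ht
    rw [hΦeq t ht]
    field_simp
    rw [add_sub_cancel_right, mul_div_cancel_right₀ _ (ne_of_gt (hcpos t ht))]
  set RΦ : ℝ → ℝ := fun t => (Measure.rnDeriv hΦmono.stieltjesFunction.measure volume t).toReal
    with hRΦdef
  have hRΦnonneg : ∀ t, 0 ≤ RΦ t := fun t => ENNReal.toReal_nonneg
  set K := (Real.cos (1/2))⁻¹ with hK
  have hKpos : 0 < K := inv_pos.mpr hc0pos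
  set C1 := 2 * Mb b * K + 2 * Mb b * K ^ 2 with hC1
  have hae : ∀ᵐ t, t ∈ J → (HasDerivAt (qf b) (deriv (qf b) t) t ∧
      |deriv (qf b) t| ≤ C1 + K * RΦ t) := by
    filter_upwards [hΦmono.ae_hasDerivAt, nE_ae_hasDerivAt b] with t h1 h2 ht
    have hcost : 0 < Real.cos (t - t0) := hcpos t ht
    have hsin : HasDerivAt (fun t' => Real.sin (t' - t0)) (Real.cos (t - t0)) t := by
      have := (Real.hasDerivAt_sin (t - t0)).comp t ((hasDerivAt_id t).sub_const t0)
      simpa [Function.comp_def] using this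
    have hcosd : HasDerivAt (fun t' => Real.cos (t' - t0)) (-Real.sin (t - t0)) t := by
      have := (Real.hasDerivAt_cos (t - t0)).comp t ((hasDerivAt_id t).sub_const t0)
      simpa [Function.comp_def] using this
    have hu : HasDerivAt (fun t' => Φ t' - Real.sin (t' - t0) * nE b t')
        (RΦ t - (Real.cos (t - t0) * nE b t + Real.sin (t - t0) * qf b t)) t :=
      h1.sub (hsin.mul h2)
    have hv : HasDerivAt (fun t' => (Real.cos (t' - t0))⁻¹)
        (Real.sin (t - t0) / (Real.cos (t - t0)) ^ 2) t := by
      have := hcosd.inv (ne_of_gt hcost)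
      rw [neg_neg] at this
      exact this
    have hprod := hu.mul hv
    have heq : qf b =ᶠ[𝓝 t] (fun t' => (Φ t' - Real.sin (t' - t0) * nE b t')
        * (Real.cos (t' - t0))⁻¹) := by
      filter_upwards [isOpen_Ioo.mem_nhds ht] with y hy using hqrep y hy
    have hq' : HasDerivAt (qf b)
        ((RΦ t - (Real.cos (t - t0) * nE b t + Real.sin (t - t0) * qf b t))
          * (Real.cos (t - t0))⁻¹
          + (Φ t - Real.sin (t - t0) * nE b t)
            * (Real.sin (t - t0) / (Real.cos (t - t0)) ^ 2)) t :=
      hprod.congr_of_eventuallyEq heq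
    have hderiv := hq'.deriv
    refine ⟨hderiv ▸ hq', ?_⟩
    rw [hderiv]
    -- bounds
    have hMb := Mb_nonneg b
    have habs1 : |RΦ t - (Real.cos (t - t0) * nE b t + Real.sin (t - t0) * qf b t)|
        ≤ RΦ t + 2 * Mb b := by
      have b1 : |Real.cos (t - t0) * nE b t| ≤ Mb b := by
        rw [abs_mul]
        calc |Real.cos (t - t0)| * |nE b t| ≤ 1 * Mb b := by
              have := abs_nE_le b t
              have := Real.abs_cos_le_one (t - t0)
              have := abs_nonneg (Real.cos (t - t0))
              nlinarith [abs_nonneg (nE b t)]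
          _ = Mb b := one_mul _
      have b2 : |Real.sin (t - t0) * qf b t| ≤ Mb b := by
        rw [abs_mul]
        calc |Real.sin (t - t0)| * |qf b t| ≤ 1 * Mb b := by
              have := abs_qf_le b t
              have := Real.abs_sin_le_one (t - t0)
              nlinarith [abs_nonneg (qf b t)]
          _ = Mb b := one_mul _
      have := abs_sub (RΦ t) (Real.cos (t - t0) * nE b t + Real.sin (t - t0) * qf b t)
      have habs := abs_add_le (Real.cos (t - t0) * nE b t) (Real.sin (t - t0) * qf b t)
      have : |RΦ t| = RΦ t := abs_of_nonneg (hRΦnonneg t)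
      calc |RΦ t - (Real.cos (t - t0) * nE b t + Real.sin (t - t0) * qf b t)|
          ≤ |RΦ t| + |Real.cos (t - t0) * nE b t + Real.sin (t - t0) * qf b t| :=
            abs_sub _ _
        _ ≤ RΦ t + 2 * Mb b := by rw [this]; linarith
    have habs2 : |Φ t - Real.sin (t - t0) * nE b t| ≤ 2 * Mb b := by
      have b1 : |Φ t| ≤ Mb b := abs_mfun_le b t0 _
      have b2 : |Real.sin (t - t0) * nE b t| ≤ Mb b := by
        rw [abs_mul]
        calc |Real.sin (t - t0)| * |nE b t| ≤ 1 * Mb b := by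
              have := abs_nE_le b t
              have := Real.abs_sin_le_one (t - t0)
              nlinarith [abs_nonneg (nE b t)]
          _ = Mb b := one_mul _
      calc |Φ t - Real.sin (t - t0) * nE b t| ≤ |Φ t| + |Real.sin (t - t0) * nE b t| :=
            abs_sub _ _
        _ ≤ 2 * Mb b := by linarith
    have hvbound : |(Real.cos (t - t0))⁻¹| ≤ K := by
      rw [abs_of_pos (inv_pos.mpr hcost), hK]
      exact inv_anti₀ hc0pos (hc0 t ht)
    have hv'bound : |Real.sin (t - t0) / (Real.cos (t - t0)) ^ 2| ≤ K ^ 2 := by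
      rw [abs_div, abs_pow, abs_of_pos hcost]
      have h1 : |Real.sin (t - t0)| ≤ 1 := Real.abs_sin_le_one _
      have hc := hc0 t ht
      have h4 : (0:ℝ) < Real.cos (t - t0) ^ 2 := by positivity
      rw [div_le_iff₀ h4]
      have key : 1 ≤ K ^ 2 * Real.cos (t - t0) ^ 2 := by
        have hdiv : 1 ≤ Real.cos (t - t0) / Real.cos (1/2) := (one_le_div hc0pos).mpr hc
        have : K ^ 2 * Real.cos (t - t0) ^ 2 = (Real.cos (t - t0) / Real.cos (1/2)) ^ 2 := by
          rw [hK, div_pow]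
          field_simp
        rw [this]
        nlinarith
      exact h1.trans key
    calc |(RΦ t - (Real.cos (t - t0) * nE b t + Real.sin (t - t0) * qf b t))
          * (Real.cos (t - t0))⁻¹
          + (Φ t - Real.sin (t - t0) * nE b t)
            * (Real.sin (t - t0) / (Real.cos (t - t0)) ^ 2)|
        ≤ (RΦ t + 2 * Mb b) * K + 2 * Mb b * K ^ 2 := by
          have e1 := abs_add_le ((RΦ t - (Real.cos (t - t0) * nE b t
            + Real.sin (t - t0) * qf b t)) * (Real.cos (t - t0))⁻¹)
            ((Φ t - Real.sin (t - t0) * nE b t)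
              * (Real.sin (t - t0) / (Real.cos (t - t0)) ^ 2))
          have e2 : |(RΦ t - (Real.cos (t - t0) * nE b t + Real.sin (t - t0) * qf b t))
              * (Real.cos (t - t0))⁻¹| ≤ (RΦ t + 2 * Mb b) * K := by
            rw [abs_mul]
            have hnn : (0:ℝ) ≤ RΦ t + 2 * Mb b := by
              have := hRΦnonneg t; linarith
            exact mul_le_mul habs1 hvbound (abs_nonneg _) hnn
          have e3 : |(Φ t - Real.sin (t - t0) * nE b t)
              * (Real.sin (t - t0) / (Real.cos (t - t0)) ^ 2)| ≤ 2 * Mb b * K ^ 2 := by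
            rw [abs_mul]
            exact mul_le_mul habs2 hv'bound (abs_nonneg _) (by linarith)
          linarith
      _ = C1 + K * RΦ t := by rw [hC1]; ring
  constructor
  · filter_upwards [hae] with t h ht
    exact (h ht).1.differentiableAt
  · -- integrability
    have hRΦint : IntegrableOn RΦ J := by
      constructor
      · exact ((Measure.measurable_rnDeriv _ _).ennreal_toReal).aestronglyMeasurable
      · rw [hasFiniteIntegral_def]
        have hb : ∀ t, (‖RΦ t‖₊ : ℝ≥0∞) ≤ Measure.rnDeriv hΦmono.stieltjesFunction.measure volume t := by
          intro t
          rw [show (‖RΦ t‖₊ : ℝ≥0∞) = ENNReal.ofReal (RΦ t) from Real.enorm_eq_ofReal (hRΦnonneg t)]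
          exact ENNReal.ofReal_toReal_le
        calc ∫⁻ t in J, (‖RΦ t‖₊ : ℝ≥0∞) ∂volume
            ≤ ∫⁻ t in J, Measure.rnDeriv hΦmono.stieltjesFunction.measure volume t ∂volume :=
              lintegral_mono hb
          _ ≤ hΦmono.stieltjesFunction.measure J := Measure.setLIntegral_rnDeriv_le J
          _ ≤ hΦmono.stieltjesFunction.measure (Icc (t0 - 1/2) (t0 + 1/2)) :=
              measure_mono Ioo_subset_Icc_self
          _ < ⊤ := isCompact_Icc.measure_lt_top
    have hbound : IntegrableOn (fun t => C1 + K * RΦ t) J :=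
      (integrableOn_const measure_Ioo_lt_top.ne).add (hRΦint.const_mul K)
    refine Integrable.mono' hbound (measurable_deriv (qf b)).aestronglyMeasurable ?_
    rw [ae_restrict_iff' measurableSet_Ioo]
    filter_upwards [hae] with t h ht
    simpa [Real.norm_eq_abs] using (h ht).2



variable (b : Module.Basis (Fin 2) ℝ X)

lemma qf_ae_differentiable : ∀ᵐ t, DifferentiableAt ℝ (qf b) t := by
  have h : ∀ n : ℤ, ∀ᵐ t, t ∈ Ioo ((n:ℝ)/2 - 1/2) ((n:ℝ)/2 + 1/2) → DifferentiableAt ℝ (qf b) t :=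
    fun n => (qf_good b _).1
  filter_upwards [ae_all_iff.mpr h] with t ht
  have hex : ∃ n : ℤ, t ∈ Ioo ((n:ℝ)/2 - 1/2) ((n:ℝ)/2 + 1/2) := by
    refine ⟨⌊2*t⌋, ?_, ?_⟩
    · have := Int.floor_le (2*t); linarith
    · have := Int.sub_one_lt_floor (2*t); linarith
  obtain ⟨n, hn⟩ := hex
  exact ht n hn

def Pfun : ℝ → X := fun t =>
  (nE b t)⁻¹ • expV b (t + π/2) + (-(qf b t) / (nE b t) ^ 2) • expV b t

lemma polar_eq : polarParam b = fun t => (nE b t)⁻¹ • expV b t := rfl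

lemma polar_hasDerivWithinAt (t : ℝ) :
    HasDerivWithinAt (polarParam b) (Pfun b t) (Ici t) t := by
  have hne : nE b t ≠ 0 := ne_of_gt (norm_expV_pos b t)
  have hinv : HasDerivWithinAt (fun t' => (nE b t')⁻¹) (-(qf b t) / (nE b t) ^ 2) (Ici t) t :=
    (qf_hasDerivWithinAt b t).inv hne
  have hE : HasDerivWithinAt (expV b) (expV b (t + π/2)) (Ici t) t :=
    (hasDerivAt_expV b t).hasDerivWithinAt
  have h := hinv.smul hE
  rw [polar_eq]
  exact h

lemma rightDeriv_polar_eq (t : ℝ) : rightDeriv (polarParam b) t = Pfun b t :=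
  (polar_hasDerivWithinAt b t).derivWithin ((uniqueDiffOn_Ici t) t self_mem_Ici)

lemma polar_hasDerivAt {t : ℝ} (h2 : HasDerivAt (nE b) (qf b t) t) :
    HasDerivAt (polarParam b) (Pfun b t) t := by
  have hne : nE b t ≠ 0 := ne_of_gt (norm_expV_pos b t)
  have hinv : HasDerivAt (fun t' => (nE b t')⁻¹) (-(qf b t) / (nE b t) ^ 2) t := h2.inv hne
  have h := hinv.smul (hasDerivAt_expV b t)
  rw [polar_eq]
  exact h

lemma hasDerivAt_expV_shift (t : ℝ) :
    HasDerivAt (fun t' => expV b (t' + π/2)) (expV b (t + π/2 + π/2)) t := by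
  have h := (hasDerivAt_expV b (t + π/2)).scomp (x := t) (h := fun t' => t' + π/2)
    ((hasDerivAt_id t).add_const (π/2))
  simpa [Function.comp_def] using h

/-- second derivative of `Pfun` at good points, with explicit value -/
lemma Pfun_hasDerivAt {t : ℝ} (h2 : HasDerivAt (nE b) (qf b t) t)
    (h3 : HasDerivAt (qf b) (deriv (qf b) t) t) :
    HasDerivAt (Pfun b)
      (((nE b t)⁻¹ • expV b (t + π/2 + π/2) + (-(qf b t) / nE b t ^ 2) • expV b (t + π/2))
        + ((-(qf b t) / nE b t ^ 2) • expV b (t + π/2)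
          + ((-deriv (qf b) t * nE b t ^ 2 - -(qf b t) * (2 * nE b t ^ 1 * qf b t))
              / (nE b t ^ 2) ^ 2) • expV b t)) t := by
  have hne : nE b t ≠ 0 := ne_of_gt (norm_expV_pos b t)
  have hne2 : nE b t ^ 2 ≠ 0 := pow_ne_zero 2 hne
  have hinv : HasDerivAt (fun t' => (nE b t')⁻¹) (-(qf b t) / (nE b t) ^ 2) t := h2.inv hne
  have hA := hinv.smul (hasDerivAt_expV_shift b t)
  have hd : HasDerivAt (fun t' => -(qf b t') / (nE b t') ^ 2)
      ((-deriv (qf b) t * nE b t ^ 2 - -(qf b t) * (2 * nE b t ^ 1 * qf b t))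
        / (nE b t ^ 2) ^ 2) t :=
    (h3.neg).div (h2.pow 2) hne2
  have hB := hd.smul (hasDerivAt_expV b t)
  exact hA.add hB

end PolarAuxProofs

section PolarAuxProofs
open Real
open scoped NNReal
section FinalAux
variable (b : Module.Basis (Fin 2) ℝ X)

lemma Pfun_deriv_locInt [CompleteSpace X] : LocallyIntegrable (deriv (Pfun b)) volume := by
  intro x
  obtain ⟨z, hz, hmin⟩ := isCompact_Icc.exists_isMinOn
    (nonempty_Icc.mpr (by linarith : x - 1/2 ≤ x + 1/2))
    ((continuous_expV b).norm.continuousOn :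
      ContinuousOn (nE b) (Icc (x - 1/2) (x + 1/2)))
  set ε := nE b z with hε
  have hεpos : 0 < ε := norm_expV_pos b z
  have hεle : ∀ t ∈ Ioo (x - 1/2) (x + 1/2), ε ≤ nE b t := fun t ht =>
    isMinOn_iff.mp hmin t (Ioo_subset_Icc_self ht)
  set C3 := ε⁻¹ * Mb b + 2 * Mb b ^ 2 * (ε ^ 2)⁻¹ + 2 * Mb b ^ 4 * (ε ^ 4)⁻¹ with hC3
  set C4 := Mb b ^ 3 * (ε ^ 4)⁻¹ with hC4
  refine ⟨Ioo (x - 1/2) (x + 1/2), Ioo_mem_nhds (by linarith) (by linarith), ?_⟩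
  have hbound : IntegrableOn (fun t => C3 + C4 * |deriv (qf b) t|)
      (Ioo (x - 1/2) (x + 1/2)) :=
    (integrableOn_const measure_Ioo_lt_top.ne).add
      (((qf_good b x).2.abs).const_mul C4)
  refine Integrable.mono' hbound (stronglyMeasurable_deriv (Pfun b)).aestronglyMeasurable ?_
  rw [ae_restrict_iff' measurableSet_Ioo]
  filter_upwards [nE_ae_hasDerivAt b, qf_ae_differentiable b] with t h2 h3 ht
  have hP := Pfun_hasDerivAt b h2 h3.hasDerivAt
  rw [hP.deriv]
  have hMb := Mb_nonneg b
  have hf1 : ε ≤ nE b t := hεle t ht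
  have hf2 : nE b t ≤ Mb b := le_of_abs_le (abs_nE_le b t)
  have hq := abs_qf_le b t
  have hfpos : 0 < nE b t := norm_expV_pos b t
  set r := deriv (qf b) t with hr
  -- individual coefficient bounds
  have b1 : |(nE b t)⁻¹| ≤ ε⁻¹ := by
    rw [abs_of_pos (inv_pos.mpr hfpos)]
    exact inv_anti₀ hεpos hf1
  have b2 : |(-(qf b t) / nE b t ^ 2)| ≤ Mb b * (ε ^ 2)⁻¹ := by
    rw [abs_div, abs_neg, abs_of_pos (by positivity : (0:ℝ) < nE b t ^ 2), div_eq_mul_inv]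
    have h4 : ε ^ 2 ≤ nE b t ^ 2 := by nlinarith
    have := inv_anti₀ (by positivity : (0:ℝ) < ε ^ 2) h4
    have hinvnn : (0:ℝ) ≤ (nE b t ^ 2)⁻¹ := by positivity
    exact mul_le_mul hq this hinvnn hMb
  have b3 : |(-r * nE b t ^ 2 - -(qf b t) * (2 * nE b t ^ 1 * qf b t)) / (nE b t ^ 2) ^ 2|
      ≤ (|r| * Mb b ^ 2 + 2 * Mb b ^ 3) * (ε ^ 4)⁻¹ := by
    rw [abs_div, div_eq_mul_inv]
    have hnum : |(-r * nE b t ^ 2 - -(qf b t) * (2 * nE b t ^ 1 * qf b t))|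
        ≤ |r| * Mb b ^ 2 + 2 * Mb b ^ 3 := by
      have e1 : |(-r * nE b t ^ 2 - -(qf b t) * (2 * nE b t ^ 1 * qf b t))|
          ≤ |(-r * nE b t ^ 2)| + |(-(qf b t) * (2 * nE b t ^ 1 * qf b t))| := abs_sub _ _
      have e2 : |(-r * nE b t ^ 2)| ≤ |r| * Mb b ^ 2 := by
        rw [abs_mul, abs_neg, abs_of_pos (by positivity : (0:ℝ) < nE b t ^ 2)]
        have : nE b t ^ 2 ≤ Mb b ^ 2 := by nlinarith
        exact mul_le_mul_of_nonneg_left this (abs_nonneg r)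
      have e3 : |(-(qf b t) * (2 * nE b t ^ 1 * qf b t))| ≤ 2 * Mb b ^ 3 := by
        rw [abs_mul, abs_neg, abs_mul, abs_mul]
        have h5 : |(2:ℝ)| = 2 := by norm_num
        have h6 : |nE b t ^ 1| ≤ Mb b := by
          rw [pow_one]; exact abs_nE_le b t
        rw [h5]
        calc |qf b t| * (2 * |nE b t ^ 1| * |qf b t|)
            ≤ Mb b * (2 * Mb b * Mb b) := by gcongr <;> positivity
          _ = 2 * Mb b ^ 3 := by ring
      linarith
    have hden : |((nE b t ^ 2) ^ 2)|⁻¹ ≤ (ε ^ 4)⁻¹ := by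
      rw [abs_of_pos (by positivity : (0:ℝ) < (nE b t ^ 2) ^ 2)]
      refine inv_anti₀ (by positivity) ?_
      calc ε ^ 4 ≤ nE b t ^ 4 := pow_le_pow_left₀ hεpos.le hf1 4
        _ = (nE b t ^ 2) ^ 2 := by ring
    have hnumnn : (0:ℝ) ≤ |r| * Mb b ^ 2 + 2 * Mb b ^ 3 := by positivity
    exact mul_le_mul hnum hden (by positivity) hnumnn
  -- assemble
  have hE1 := norm_expV_le b (t + π/2 + π/2)
  have hE2 := norm_expV_le b (t + π/2)
  have hE3 := norm_expV_le b t
  have htot : ‖((nE b t)⁻¹ • expV b (t + π/2 + π/2)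
        + (-(qf b t) / nE b t ^ 2) • expV b (t + π/2))
      + ((-(qf b t) / nE b t ^ 2) • expV b (t + π/2)
        + ((-r * nE b t ^ 2 - -(qf b t) * (2 * nE b t ^ 1 * qf b t))
            / (nE b t ^ 2) ^ 2) • expV b t)‖
      ≤ |(nE b t)⁻¹| * Mb b + |(-(qf b t) / nE b t ^ 2)| * Mb b
        + (|(-(qf b t) / nE b t ^ 2)| * Mb b
          + |(-r * nE b t ^ 2 - -(qf b t) * (2 * nE b t ^ 1 * qf b t)) / (nE b t ^ 2) ^ 2|
            * Mb b) := by
    refine (norm_add_le _ _).trans ?_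
    have n1 : ‖(nE b t)⁻¹ • expV b (t + π/2 + π/2)‖ ≤ |(nE b t)⁻¹| * Mb b := by
      rw [norm_smul, Real.norm_eq_abs]
      exact mul_le_mul_of_nonneg_left hE1 (abs_nonneg _)
    have n2 : ‖(-(qf b t) / nE b t ^ 2) • expV b (t + π/2)‖
        ≤ |(-(qf b t) / nE b t ^ 2)| * Mb b := by
      rw [norm_smul, Real.norm_eq_abs]
      exact mul_le_mul_of_nonneg_left hE2 (abs_nonneg _)
    have n3 : ‖((-r * nE b t ^ 2 - -(qf b t) * (2 * nE b t ^ 1 * qf b t))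
          / (nE b t ^ 2) ^ 2) • expV b t‖
        ≤ |(-r * nE b t ^ 2 - -(qf b t) * (2 * nE b t ^ 1 * qf b t)) / (nE b t ^ 2) ^ 2|
          * Mb b := by
      rw [norm_smul, Real.norm_eq_abs]
      exact mul_le_mul_of_nonneg_left hE3 (abs_nonneg _)
    have t1 := (norm_add_le ((nE b t)⁻¹ • expV b (t + π/2 + π/2))
      ((-(qf b t) / nE b t ^ 2) • expV b (t + π/2)))
    have t2 := (norm_add_le ((-(qf b t) / nE b t ^ 2) • expV b (t + π/2))
      (((-r * nE b t ^ 2 - -(qf b t) * (2 * nE b t ^ 1 * qf b t))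
          / (nE b t ^ 2) ^ 2) • expV b t))
    linarith
  refine htot.trans ?_
  have final : |(nE b t)⁻¹| * Mb b + |(-(qf b t) / nE b t ^ 2)| * Mb b
      + (|(-(qf b t) / nE b t ^ 2)| * Mb b
        + |(-r * nE b t ^ 2 - -(qf b t) * (2 * nE b t ^ 1 * qf b t)) / (nE b t ^ 2) ^ 2|
          * Mb b) ≤ C3 + C4 * |r| := by
    have m1 : |(nE b t)⁻¹| * Mb b ≤ ε⁻¹ * Mb b := mul_le_mul_of_nonneg_right b1 hMb
    have m2 : |(-(qf b t) / nE b t ^ 2)| * Mb b ≤ Mb b * (ε ^ 2)⁻¹ * Mb b :=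
      mul_le_mul_of_nonneg_right b2 hMb
    have m3 : |(-r * nE b t ^ 2 - -(qf b t) * (2 * nE b t ^ 1 * qf b t)) / (nE b t ^ 2) ^ 2|
        * Mb b ≤ (|r| * Mb b ^ 2 + 2 * Mb b ^ 3) * (ε ^ 4)⁻¹ * Mb b :=
      mul_le_mul_of_nonneg_right b3 hMb
    rw [hC3, hC4]
    have m3' := m3.trans_eq (by ring : (|r| * Mb b ^ 2 + 2 * Mb b ^ 3) * (ε ^ 4)⁻¹ * Mb b
      = Mb b ^ 3 * (ε ^ 4)⁻¹ * |r| + 2 * Mb b ^ 4 * (ε ^ 4)⁻¹)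
    have m2' := m2.trans_eq (by ring : Mb b * (ε ^ 2)⁻¹ * Mb b = Mb b ^ 2 * (ε ^ 2)⁻¹)
    linarith
  simpa using final

end FinalAux
end PolarAuxProofs



/-- The polar parameterization is twice differentiable almost everywhere, with a locally
integrable second derivative. -/
theorem polarParam_ae_twice_differentiable [CompleteSpace X] (b : Module.Basis (Fin 2) ℝ X) :
    ∃ g : ℝ → X, LocallyIntegrable g volume ∧
      ∀ᵐ t : ℝ, HasDerivAt (polarParam b) (rightDeriv (polarParam b) t) t ∧
        HasDerivAt (rightDeriv (polarParam b)) (g t) t := by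
  refine ⟨deriv (Pfun b), Pfun_deriv_locInt b, ?_⟩
  have hfun : rightDeriv (polarParam b) = Pfun b := funext (rightDeriv_polar_eq b)
  filter_upwards [nE_ae_hasDerivAt b, qf_ae_differentiable b] with t h2 h3
  constructor
  · rw [hfun]
    exact polar_hasDerivAt b h2
  · have hP := Pfun_hasDerivAt b h2 h3.hasDerivAt
    rw [hfun, hP.deriv]
    exact hP

end
end

section
/- Let X be a 2-based Banach space with polar parameterization p and constants c, C. Then for every t ∈ ℝ the one-sided derivatives satisfy c/C ≤ min{‖p'_−(t)‖, ‖p'_+(t)‖} ≤ max{‖p'_−(t)‖, ‖p'_+(t)‖} ≤ 2C²/c². -/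
noncomputable section
open MeasureTheory Set Filter
open scoped ENNReal Topology

variable {X : Type*} [NormedAddCommGroup X] [NormedSpace ℝ X]

lemma convex_hasRightDerivAt (φ : ℝ → ℝ) (hφ : ConvexOn ℝ univ φ) (t : ℝ) :
    ∃ d, HasDerivWithinAt φ d (Ici t) t := by
  have mono : MonotoneOn (slope φ t) (Ioi t) := by
    intro x hx y hy hxy
    rw [slope_def_field, slope_def_field]
    exact hφ.secant_mono (mem_univ t) (mem_univ x) (mem_univ y)
      (ne_of_gt hx) (ne_of_gt hy) hxy
  have bdd : BddBelow (slope φ t '' Ioi t) := by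
    refine ⟨slope φ t (t - 1), ?_⟩
    rintro _ ⟨y, hy, rfl⟩
    rw [slope_def_field, slope_def_field]
    exact hφ.secant_mono (mem_univ t) (mem_univ _) (mem_univ _)
      (by norm_num) (ne_of_gt hy) (by linarith [mem_Ioi.1 hy])
  refine ⟨sInf (slope φ t '' Ioi t), ?_⟩
  rw [hasDerivWithinAt_iff_tendsto_slope, Ici_sdiff_left]
  exact mono.tendsto_nhdsGT bdd

lemma convex_hasLeftDerivAt (φ : ℝ → ℝ) (hφ : ConvexOn ℝ univ φ) (t : ℝ) :
    ∃ d, HasDerivWithinAt φ d (Iic t) t := by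
  have mono : MonotoneOn (slope φ t) (Iio t) := by
    intro x hx y hy hxy
    rw [slope_def_field, slope_def_field]
    exact hφ.secant_mono (mem_univ t) (mem_univ x) (mem_univ y)
      (ne_of_lt hx) (ne_of_lt hy) hxy
  have bdd : BddAbove (slope φ t '' Iio t) := by
    refine ⟨slope φ t (t + 1), ?_⟩
    rintro _ ⟨y, hy, rfl⟩
    rw [slope_def_field, slope_def_field]
    exact hφ.secant_mono (mem_univ t) (mem_univ _) (mem_univ _)
      (ne_of_lt hy) (by norm_num) (by linarith [mem_Iio.1 hy])
  refine ⟨sSup (slope φ t '' Iio t), ?_⟩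
  rw [hasDerivWithinAt_iff_tendsto_slope, Iic_sdiff_right]
  exact mono.tendsto_nhdsLT bdd
lemma norm_line_convexOn (x v : X) (t : ℝ) :
    ConvexOn ℝ univ (fun u : ℝ => ‖x + (u - t) • v‖) := by
  have h := (convexOn_univ_norm (E := X)).comp_affineMap
    (AffineMap.lineMap (x - t • v) (x - t • v + v))
  have he : (⇑(AffineMap.lineMap (x - t • v) (x - t • v + v)) ⁻¹' univ : Set ℝ) = univ := by simp
  rw [he] at h
  have hfun : (norm ∘ ⇑(AffineMap.lineMap (x - t • v) (x - t • v + v)) : ℝ → ℝ)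
      = fun u : ℝ => ‖x + (u - t) • v‖ := by
    funext u
    have hl : AffineMap.lineMap (x - t • v) (x - t • v + v) u = x + (u - t) • v := by
      rw [AffineMap.lineMap_apply_module]
      module
    rw [Function.comp_apply, hl]
  rwa [hfun] at h

lemma norm_curve_transfer (γ : ℝ → X) (v : X) (t : ℝ) (hγ : HasDerivAt γ v t)
    (s : Set ℝ) (d : ℝ)
    (hd : HasDerivWithinAt (fun u => ‖γ t + (u - t) • v‖) d s t) :
    HasDerivWithinAt (fun u => ‖γ u‖) d s t := by
  set h : ℝ → ℝ := fun u => ‖γ t + (u - t) • v‖ with hh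
  set g : ℝ → ℝ := fun u => ‖γ u‖ with hg
  rw [hasDerivWithinAt_iff_tendsto_slope] at hd ⊢
  have hle : ∀ u : ℝ, u ≠ t → |slope g t u - slope h t u| ≤ ‖slope γ t u - v‖ := by
    intro u hu
    have hut : u - t ≠ 0 := sub_ne_zero.2 hu
    have e1 : slope g t u - slope h t u = (u - t)⁻¹ * (g u - h u) := by
      rw [slope_def_field, slope_def_field]
      have hgt : h t = g t := by simp [hh, hg]
      rw [← hgt]
      field_simp
      ring
    have e2 : slope γ t u - v = (u - t)⁻¹ • (γ u - (γ t + (u - t) • v)) := by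
      simp only [slope, vsub_eq_sub]
      rw [smul_sub ((u - t)⁻¹) (γ u) (γ t + (u - t) • v),
        smul_add ((u - t)⁻¹) (γ t) ((u - t) • v), smul_smul,
        inv_mul_cancel₀ hut, one_smul, smul_sub]
      abel
    rw [e1, e2, abs_mul, abs_inv, norm_smul, norm_inv, Real.norm_eq_abs]
    gcongr
    exact abs_norm_sub_norm_le _ _
  have hγs : Tendsto (fun u => ‖slope γ t u - v‖) (𝓝[s \ {t}] t) (𝓝 0) := by
    have h1 : Tendsto (slope γ t) (𝓝[≠] t) (𝓝 v) := hasDerivAt_iff_tendsto_slope.1 hγ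
    have h2 : 𝓝[s \ {t}] t ≤ 𝓝[≠] t := nhdsWithin_mono t (fun u hu => hu.2)
    have := (h1.mono_left h2).sub (tendsto_const_nhds (x := v))
    simpa using this.norm
  have key : Tendsto (fun u => slope g t u - slope h t u) (𝓝[s \ {t}] t) (𝓝 0) := by
    apply squeeze_zero_norm' _ hγs
    filter_upwards [self_mem_nhdsWithin] with u hu
    exact hle u hu.2
  have := hd.add key
  rw [add_zero] at this
  convert this using 1
  funext u; ring
lemma coord_expV0 (b : Module.Basis (Fin 2) ℝ X) (t : ℝ) : b.coord 0 (expV b t) = Real.cos t := by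
  simp [expV, Module.Basis.coord_apply, map_add, _root_.map_smul, Module.Basis.repr_self]

lemma coord_expV1 (b : Module.Basis (Fin 2) ℝ X) (t : ℝ) : b.coord 1 (expV b t) = Real.sin t := by
  simp [expV, Module.Basis.coord_apply, map_add, _root_.map_smul, Module.Basis.repr_self]

lemma euclNorm_expV (b : Module.Basis (Fin 2) ℝ X) (t : ℝ) : euclNorm b (expV b t) = 1 := by
  rw [euclNorm, coord_expV0, coord_expV1]
  rw [show Real.cos t ^ 2 + Real.sin t ^ 2 = 1 from by
    rw [add_comm]; exact Real.sin_sq_add_cos_sq t]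
  exact Real.sqrt_one

lemma euclNorm_nonneg (b : Module.Basis (Fin 2) ℝ X) (x : X) : 0 ≤ euclNorm b x := Real.sqrt_nonneg _

lemma abs_coord0_le_euclNorm (b : Module.Basis (Fin 2) ℝ X) (x : X) :
    |b.coord 0 x| ≤ euclNorm b x := by
  rw [euclNorm, ← Real.sqrt_sq_eq_abs]
  exact Real.sqrt_le_sqrt (by nlinarith [sq_nonneg (b.coord 1 x)])

lemma abs_coord1_le_euclNorm (b : Module.Basis (Fin 2) ℝ X) (x : X) :
    |b.coord 1 x| ≤ euclNorm b x := by
  rw [euclNorm, ← Real.sqrt_sq_eq_abs]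
  exact Real.sqrt_le_sqrt (by nlinarith [sq_nonneg (b.coord 0 x)])

lemma euclNorm_smul (b : Module.Basis (Fin 2) ℝ X) (a : ℝ) (x : X) :
    euclNorm b (a • x) = |a| * euclNorm b x := by
  rw [euclNorm, euclNorm, _root_.map_smul, _root_.map_smul]
  rw [show (a • b.coord 0 x)^2 + (a • b.coord 1 x)^2
      = a^2 * ((b.coord 0 x)^2 + (b.coord 1 x)^2) from by simp [smul_eq_mul]; ring]
  rw [Real.sqrt_mul (sq_nonneg a), Real.sqrt_sq_eq_abs]

lemma euclNorm_eq_zero (b : Module.Basis (Fin 2) ℝ X) (x : X) (h : euclNorm b x = 0) : x = 0 := by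
  rw [euclNorm] at h
  have h2 := Real.sqrt_eq_zero'.mp h
  have h0 : b.coord 0 x = 0 := by nlinarith [sq_nonneg (b.coord 0 x), sq_nonneg (b.coord 1 x)]
  have h1 : b.coord 1 x = 0 := by nlinarith [sq_nonneg (b.coord 0 x), sq_nonneg (b.coord 1 x)]
  apply (b.forall_coord_eq_zero_iff).1
  intro i
  fin_cases i
  · exact h0
  · exact h1

lemma norm_le_sum_mul_euclNorm (b : Module.Basis (Fin 2) ℝ X) (x : X) :
    ‖x‖ ≤ (‖b 0‖ + ‖b 1‖) * euclNorm b x := by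
  have hx : x = b.coord 0 x • b 0 + b.coord 1 x • b 1 := by
    have := b.sum_repr x
    rw [Fin.sum_univ_two] at this
    simp only [Module.Basis.coord_apply]
    exact this.symm
  calc ‖x‖ = ‖b.coord 0 x • b 0 + b.coord 1 x • b 1‖ := by rw [← hx]
    _ ≤ ‖b.coord 0 x • b 0‖ + ‖b.coord 1 x • b 1‖ := norm_add_le _ _
    _ = |b.coord 0 x| * ‖b 0‖ + |b.coord 1 x| * ‖b 1‖ := by
        rw [norm_smul, norm_smul, Real.norm_eq_abs, Real.norm_eq_abs]
    _ ≤ euclNorm b x * ‖b 0‖ + euclNorm b x * ‖b 1‖ := by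
        gcongr <;> first
          | exact abs_coord0_le_euclNorm b x
          | exact abs_coord1_le_euclNorm b x
    _ = (‖b 0‖ + ‖b 1‖) * euclNorm b x := by ring

lemma sphere_nonempty' (b : Module.Basis (Fin 2) ℝ X) : (b 0) ∈ {x : X | euclNorm b x = 1} := by
  have h0 : b.coord 0 (b 0) = 1 := by simp [Module.Basis.coord_apply, Module.Basis.repr_self]
  have h1 : b.coord 1 (b 0) = 0 := by simp [Module.Basis.coord_apply, Module.Basis.repr_self]
  simp [euclNorm, h0, h1, Set.mem_setOf_eq]

lemma bddAbove_normimg (b : Module.Basis (Fin 2) ℝ X) :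
    BddAbove (norm '' {x : X | euclNorm b x = 1}) := by
  refine ⟨‖b 0‖ + ‖b 1‖, ?_⟩
  rintro _ ⟨x, hx, rfl⟩
  have := norm_le_sum_mul_euclNorm b x
  rw [Set.mem_setOf_eq.mp hx, mul_one] at this
  exact this

lemma norm_le_CConst (b : Module.Basis (Fin 2) ℝ X) (x : X) (hx : euclNorm b x = 1) :
    ‖x‖ ≤ CConst b :=
  le_csSup (bddAbove_normimg b) (Set.mem_image_of_mem _ hx)

lemma cConst_le_norm (b : Module.Basis (Fin 2) ℝ X) (x : X) (hx : euclNorm b x = 1) :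
    cConst b ≤ ‖x‖ :=
  csInf_le ⟨0, fun _ ⟨_, _, h⟩ => h ▸ norm_nonneg _⟩ (Set.mem_image_of_mem _ hx)

lemma cConst_pos (b : Module.Basis (Fin 2) ℝ X) : 0 < cConst b := by
  haveI : FiniteDimensional ℝ X := Module.Finite.of_basis b
  have hcont : Continuous (euclNorm b) := by
    apply Real.continuous_sqrt.comp
    exact ((LinearMap.continuous_of_finiteDimensional (b.coord 0)).pow 2).add
      ((LinearMap.continuous_of_finiteDimensional (b.coord 1)).pow 2)
  have hclosed : IsClosed {x : X | euclNorm b x = 1} := isClosed_eq hcont continuous_const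
  have hsub : {x : X | euclNorm b x = 1} ⊆ Metric.closedBall 0 (‖b 0‖ + ‖b 1‖) := by
    intro x hx
    rw [Metric.mem_closedBall, dist_zero_right]
    have := norm_le_sum_mul_euclNorm b x
    rwa [Set.mem_setOf_eq.mp hx, mul_one] at this
  have hcpt : IsCompact {x : X | euclNorm b x = 1} :=
    (isCompact_closedBall (0 : X) _).of_isClosed_subset hclosed hsub
  obtain ⟨x₀, hx₀, hmin⟩ := hcpt.exists_isMinOn ⟨b 0, sphere_nonempty' b⟩
    continuous_norm.continuousOn
  have hx₀ne : x₀ ≠ 0 := by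
    intro h
    rw [Set.mem_setOf_eq, h] at hx₀
    simp [euclNorm] at hx₀
  have : (0:ℝ) < ‖x₀‖ := norm_pos_iff.mpr hx₀ne
  refine lt_of_lt_of_le this ?_
  apply le_csInf ⟨‖b 0‖, Set.mem_image_of_mem _ (sphere_nonempty' b)⟩
  rintro _ ⟨x, hx, rfl⟩
  exact hmin hx

lemma cConst_mul_le_norm (b : Module.Basis (Fin 2) ℝ X) (x : X) :
    cConst b * euclNorm b x ≤ ‖x‖ := by
  rcases eq_or_ne (euclNorm b x) 0 with h | h
  · rw [h, mul_zero]; exact norm_nonneg x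
  · have hpos : 0 < euclNorm b x := lt_of_le_of_ne (euclNorm_nonneg b x) (Ne.symm h)
    have hy : euclNorm b ((euclNorm b x)⁻¹ • x) = 1 := by
      rw [euclNorm_smul, abs_of_pos (inv_pos.2 hpos), inv_mul_cancel₀ h]
    have := cConst_le_norm b _ hy
    rw [norm_smul, Real.norm_eq_abs, abs_of_pos (inv_pos.2 hpos)] at this
    calc cConst b * euclNorm b x ≤ ((euclNorm b x)⁻¹ * ‖x‖) * euclNorm b x :=
          mul_le_mul_of_nonneg_right this hpos.le
      _ = ‖x‖ := by field_simp

lemma norm_le_CConst_mul (b : Module.Basis (Fin 2) ℝ X) (x : X) :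
    ‖x‖ ≤ CConst b * euclNorm b x := by
  rcases eq_or_ne (euclNorm b x) 0 with h | h
  · rw [euclNorm_eq_zero b x h]
    have h0 : euclNorm b (0 : X) = 0 := by simp [euclNorm]
    rw [h0]
    simp
  · have hpos : 0 < euclNorm b x := lt_of_le_of_ne (euclNorm_nonneg b x) (Ne.symm h)
    have hy : euclNorm b ((euclNorm b x)⁻¹ • x) = 1 := by
      rw [euclNorm_smul, abs_of_pos (inv_pos.2 hpos), inv_mul_cancel₀ h]
    have := norm_le_CConst b _ hy
    rw [norm_smul, Real.norm_eq_abs, abs_of_pos (inv_pos.2 hpos)] at this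
    calc ‖x‖ = ((euclNorm b x)⁻¹ * ‖x‖) * euclNorm b x := by field_simp
      _ ≤ CConst b * euclNorm b x :=
          mul_le_mul_of_nonneg_right this hpos.le

lemma cConst_le_CConst (b : Module.Basis (Fin 2) ℝ X) : cConst b ≤ CConst b :=
  (cConst_le_norm b _ (sphere_nonempty' b)).trans (norm_le_CConst b _ (sphere_nonempty' b))

lemma coord_dexpV0 (b : Module.Basis (Fin 2) ℝ X) (t : ℝ) :
    b.coord 0 ((-Real.sin t) • b 0 + Real.cos t • b 1) = -Real.sin t := by
  simp [Module.Basis.coord_apply, map_add, _root_.map_smul, Module.Basis.repr_self]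

lemma coord_dexpV1 (b : Module.Basis (Fin 2) ℝ X) (t : ℝ) :
    b.coord 1 ((-Real.sin t) • b 0 + Real.cos t • b 1) = Real.cos t := by
  simp [Module.Basis.coord_apply, map_add, _root_.map_smul, Module.Basis.repr_self]

lemma euclNorm_dexpV (b : Module.Basis (Fin 2) ℝ X) (t : ℝ) :
    euclNorm b ((-Real.sin t) • b 0 + Real.cos t • b 1) = 1 := by
  rw [euclNorm, coord_dexpV0, coord_dexpV1]
  rw [show (-Real.sin t) ^ 2 + Real.cos t ^ 2 = 1 from by
    rw [neg_pow]; simpa using Real.sin_sq_add_cos_sq t]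
  exact Real.sqrt_one

lemma hasDerivAt_expV_s6 (b : Module.Basis (Fin 2) ℝ X) (t : ℝ) :
    HasDerivAt (expV b) ((-Real.sin t) • b 0 + Real.cos t • b 1) t := by
  have h0 : HasDerivAt (fun u => Real.cos u • b 0) ((-Real.sin t) • b 0) t :=
    (Real.hasDerivAt_cos t).smul_const _
  have h1 : HasDerivAt (fun u => Real.sin u • b 1) ((Real.cos t) • b 1) t :=
    (Real.hasDerivAt_sin t).smul_const _
  exact h0.add h1

lemma euclNorm_expV_sub (b : Module.Basis (Fin 2) ℝ X) (u t : ℝ) :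
    euclNorm b (expV b u - expV b t) ≤ |u - t| := by
  have h0 : b.coord 0 (expV b u - expV b t) = Real.cos u - Real.cos t := by
    rw [map_sub, coord_expV0, coord_expV0]
  have h1 : b.coord 1 (expV b u - expV b t) = Real.sin u - Real.sin t := by
    rw [map_sub, coord_expV1, coord_expV1]
  rw [euclNorm, h0, h1, ← Real.sqrt_sq_eq_abs]
  apply Real.sqrt_le_sqrt
  have hcos := Real.cos_sub u t
  have hc := Real.one_sub_sq_div_two_le_cos (x := u - t)
  nlinarith [Real.sin_sq_add_cos_sq u, Real.sin_sq_add_cos_sq t]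

lemma norm_expV_sub_le (b : Module.Basis (Fin 2) ℝ X) (u t : ℝ) :
    ‖expV b u - expV b t‖ ≤ CConst b * |u - t| := by
  calc ‖expV b u - expV b t‖ ≤ CConst b * euclNorm b (expV b u - expV b t) :=
        norm_le_CConst_mul b _
    _ ≤ CConst b * |u - t| := by
        have hC : 0 < CConst b := (cConst_pos b).trans_le (cConst_le_CConst b)
        exact mul_le_mul_of_nonneg_left (euclNorm_expV_sub b u t) hC.le

lemma polar_bounds_within (b : Module.Basis (Fin 2) ℝ X) (t : ℝ) (s : Set ℝ)
    (hs : UniqueDiffWithinAt ℝ s t) (hne : (𝓝[s \ {t}] t).NeBot)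
    {d : ℝ} (hd : HasDerivWithinAt (fun u => ‖expV b u‖) d s t) :
    cConst b / CConst b ≤ ‖derivWithin (polarParam b) s t‖ ∧
      ‖derivWithin (polarParam b) s t‖ ≤ 2 * (CConst b)^2 / (cConst b)^2 := by
  set c := cConst b with hcdef
  set C := CConst b with hCdef
  have hc : 0 < c := cConst_pos b
  have hcC : c ≤ C := cConst_le_CConst b
  have hC : 0 < C := hc.trans_le hcC
  set E := expV b t with hE
  set V : X := (-Real.sin t) • b 0 + Real.cos t • b 1 with hVdef
  set G := ‖expV b t‖ with hGdef
  have hGlb : c ≤ G := by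
    have := cConst_mul_le_norm b E
    rwa [euclNorm_expV, mul_one] at this
  have hGub : G ≤ C := by
    have := norm_le_CConst_mul b E
    rwa [euclNorm_expV, mul_one] at this
  have hGpos : 0 < G := hc.trans_le hGlb
  have hGne : G ≠ 0 := ne_of_gt hGpos
  have hV : HasDerivAt (expV b) V t := hasDerivAt_expV_s6 b t
  have hVnorm : ‖V‖ ≤ C := by
    have := norm_le_CConst_mul b V
    rwa [euclNorm_dexpV, mul_one] at this
  have hEnorm : ‖E‖ ≤ C := hGub
  -- |d| ≤ C
  have hdC : |d| ≤ C := by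
    have hslope : Tendsto (slope (fun u => ‖expV b u‖) t) (𝓝[s \ {t}] t) (𝓝 d) :=
      hasDerivWithinAt_iff_tendsto_slope.1 hd
    have habs : Tendsto (fun u => |slope (fun u => ‖expV b u‖) t u|) (𝓝[s \ {t}] t) (𝓝 |d|) :=
      hslope.abs
    apply le_of_tendsto habs
    filter_upwards [self_mem_nhdsWithin] with u hu
    have hut : u - t ≠ 0 := sub_ne_zero.2 hu.2
    rw [slope_def_field, abs_div]
    rw [div_le_iff₀ (abs_pos.2 hut)]
    calc |‖expV b u‖ - ‖expV b t‖| ≤ ‖expV b u - expV b t‖ := abs_norm_sub_norm_le _ _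
      _ ≤ C * |u - t| := norm_expV_sub_le b u t
  -- derivative of polarParam
  set w : X := G⁻¹ • V + (-d / G^2) • E with hwdef
  have hp : HasDerivWithinAt (polarParam b) w s t := by
    have hinv : HasDerivWithinAt (fun u => ‖expV b u‖⁻¹) (-d / G^2) s t := hd.inv hGne
    have := hinv.smul hV.hasDerivWithinAt
    exact this
  have hderiv : derivWithin (polarParam b) s t = w := hp.derivWithin hs
  rw [hderiv]
  constructor
  · -- lower bound
    set κ0 := b.coord 0 w with hκ0def
    set κ1 := b.coord 1 w with hκ1def
    have hκ0 : κ0 = G⁻¹ * (-Real.sin t) + (-d / G^2) * Real.cos t := by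
      rw [hκ0def, hwdef, map_add, _root_.map_smul, _root_.map_smul, smul_eq_mul, smul_eq_mul,
        hVdef, hE, coord_dexpV0, coord_expV0]
    have hκ1 : κ1 = G⁻¹ * Real.cos t + (-d / G^2) * Real.sin t := by
      rw [hκ1def, hwdef, map_add, _root_.map_smul, _root_.map_smul, smul_eq_mul, smul_eq_mul,
        hVdef, hE, coord_dexpV1, coord_expV1]
    have key : Real.cos t * κ1 - Real.sin t * κ0 = G⁻¹ := by
      rw [hκ0, hκ1]
      have : Real.cos t * (G⁻¹ * Real.cos t + -d / G^2 * Real.sin t)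
          - Real.sin t * (G⁻¹ * (-Real.sin t) + -d / G^2 * Real.cos t)
          = G⁻¹ * (Real.sin t^2 + Real.cos t^2) := by ring
      rw [this, Real.sin_sq_add_cos_sq, mul_one]
    have h2 : (G⁻¹)^2 ≤ κ0^2 + κ1^2 := by
      have expand : (Real.cos t * κ1 - Real.sin t * κ0)^2
          + (Real.cos t * κ0 + Real.sin t * κ1)^2
          = (Real.sin t^2 + Real.cos t^2) * (κ0^2 + κ1^2) := by ring
      rw [Real.sin_sq_add_cos_sq, one_mul, key] at expand
      nlinarith [sq_nonneg (Real.cos t * κ0 + Real.sin t * κ1)]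
    have hEucl : G⁻¹ ≤ euclNorm b w := by
      rw [euclNorm, ← hκ0def, ← hκ1def]
      calc G⁻¹ = Real.sqrt ((G⁻¹)^2) := (Real.sqrt_sq (by positivity)).symm
        _ ≤ Real.sqrt (κ0^2 + κ1^2) := Real.sqrt_le_sqrt h2
    calc c / C = c * C⁻¹ := div_eq_mul_inv c C
      _ ≤ c * G⁻¹ := mul_le_mul_of_nonneg_left (inv_anti₀ hGpos hGub) hc.le
      _ ≤ c * euclNorm b w := mul_le_mul_of_nonneg_left hEucl hc.le
      _ ≤ ‖w‖ := cConst_mul_le_norm b w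
  · -- upper bound
    have t1 : G⁻¹ * ‖V‖ ≤ c⁻¹ * C :=
      mul_le_mul (inv_anti₀ hc hGlb) hVnorm (norm_nonneg _) (by positivity)
    have habsd : |(-d) / G^2| ≤ C / c^2 := by
      rw [abs_div, abs_neg, abs_of_pos (by positivity : (0:ℝ) < G^2)]
      exact div_le_div₀ hC.le hdC (by positivity) (pow_le_pow_left₀ hc.le hGlb 2)
    have t2 : |(-d) / G^2| * ‖E‖ ≤ (C / c^2) * C :=
      mul_le_mul habsd hEnorm (norm_nonneg _) (by positivity)
    have hw : ‖w‖ ≤ C / c + C * C / c^2 := by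
      calc ‖w‖ ≤ ‖G⁻¹ • V‖ + ‖(-d / G^2) • E‖ := norm_add_le _ _
        _ = G⁻¹ * ‖V‖ + |(-d) / G^2| * ‖E‖ := by
            rw [norm_smul, norm_smul, Real.norm_eq_abs, Real.norm_eq_abs,
              abs_of_pos (inv_pos.2 hGpos)]
        _ ≤ c⁻¹ * C + (C / c^2) * C := add_le_add t1 t2
        _ = C / c + C * C / c^2 := by ring
    refine hw.trans ?_
    rw [div_add_div _ _ (ne_of_gt hc) (ne_of_gt (by positivity : (0:ℝ) < c^2)),
      div_le_div_iff₀ (by positivity) (by positivity)]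
    nlinarith [mul_le_mul_of_nonneg_left hcC (by positivity : (0:ℝ) ≤ C * c^3)]


/-- Bounds on the norms of the one-sided derivatives of the polar parameterization. -/
theorem polarParam_oneSided_deriv_norm_bounds [CompleteSpace X]
    (b : Module.Basis (Fin 2) ℝ X) (t : ℝ) :
    cConst b / CConst b ≤ min ‖leftDeriv (polarParam b) t‖ ‖rightDeriv (polarParam b) t‖ ∧
    max ‖leftDeriv (polarParam b) t‖ ‖rightDeriv (polarParam b) t‖ ≤
      2 * (CConst b)^2 / (cConst b)^2 := by
  have hV := hasDerivAt_expV_s6 b t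
  have hconv := norm_line_convexOn (expV b t) ((-Real.sin t) • b 0 + Real.cos t • b 1) t
  obtain ⟨d1, hd1'⟩ := convex_hasRightDerivAt _ hconv t
  have hd1 : HasDerivWithinAt (fun u => ‖expV b u‖) d1 (Ici t) t :=
    norm_curve_transfer (expV b) _ t hV (Ici t) d1 hd1'
  obtain ⟨d2, hd2'⟩ := convex_hasLeftDerivAt _ hconv t
  have hd2 : HasDerivWithinAt (fun u => ‖expV b u‖) d2 (Iic t) t :=
    norm_curve_transfer (expV b) _ t hV (Iic t) d2 hd2'
  have hne1 : (𝓝[Ici t \ {t}] t).NeBot := by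
    rw [Ici_sdiff_left]; exact nhdsGT_neBot t
  have hne2 : (𝓝[Iic t \ {t}] t).NeBot := by
    rw [Iic_sdiff_right]; exact nhdsLT_neBot t
  have h1 := polar_bounds_within b t (Ici t) (uniqueDiffOn_Ici t t (by simp)) hne1 hd1
  have h2 := polar_bounds_within b t (Iic t) (uniqueDiffOn_Iic t t (by simp)) hne2 hd2
  have e1 : rightDeriv (polarParam b) t = derivWithin (polarParam b) (Ici t) t := rfl
  have e2 : leftDeriv (polarParam b) t = derivWithin (polarParam b) (Iic t) t := rfl
  rw [e1, e2]
  exact ⟨le_min h2.1 h1.1, max_le h2.2 h1.2⟩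

end
end
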